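/- arXiv:1809.09906 — 7 statements merged into one kernel-verified Lean document; each statement's English description precedes it below -/
import Mathlib

section
/- Let K be a field of characteristic p > 0, let a ∈ K with a not in {x^p − x | x ∈ K}, let L = K[X]/(X^p − X − a) and let θ be the class of X in L. For k ∈ F_p set θ_k = 1/(θ − k). Then the family (θ_k)_{k ∈ F_p} is a K-basis of L, and the generator σ of Gal(L/K) determined by σ(θ) = θ + 1 satisfies σ(θ_k) = θ_{k−1} for every k ∈ F_p; in particular (θ_0, θ_1, …, θ_{p−1}) is a normal basis of L over K. -/
open Polynomial


theorem prodZMod (p : ℕ) [Fact p.Prime] :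
    (∏ k : ZMod p, (X - C k)) = X ^ p - X := by
  have h1 : Splits (X ^ p - X : (ZMod p)[X]) := by
    have := FiniteField.splits_X_pow_card_sub_X (p := p) (K := ZMod p)
    rwa [ZMod.card, Algebra.algebraMap_self, Polynomial.map_id] at this
  have hm : (X ^ p - X : (ZMod p)[X]).Monic := by
    have hp := (Fact.out : p.Prime).one_lt
    have h1 : ((X : (ZMod p)[X])).degree < ((X : (ZMod p)[X]) ^ p).degree := by
      rw [degree_X_pow, degree_X]; exact_mod_cast hp
    exact (monic_X_pow p).sub_of_left h1
  have hr : (X ^ p - X : (ZMod p)[X]).roots = Finset.univ.val := by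
    have := FiniteField.roots_X_pow_card_sub_X (ZMod p)
    rwa [ZMod.card] at this
  have := h1.eq_prod_roots_of_monic hm
  rw [hr] at this
  rw [this, Finset.prod_eq_multiset_prod]

-- product identity over any field L with CharP p
theorem prodL (L : Type*) [Field L] (p : ℕ) [Fact p.Prime] [CharP L p] :
    (∏ k : ZMod p, (X - C (ZMod.castHom (dvd_refl p) L k))) = X ^ p - X := by
  have := congrArg (Polynomial.map (ZMod.castHom (dvd_refl p) L)) (prodZMod p)
  simpa [Polynomial.map_prod, Polynomial.map_sub, Polynomial.map_pow] using this


theorem monic_arts (K : Type*) [Field K] {p : ℕ} (hp : 1 < p) (a : K) :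
    (X ^ p - X - C a : K[X]).Monic := by
  have h1 : ((X : K[X]) + C a).degree < ((X : K[X]) ^ p).degree := by
    apply lt_of_le_of_lt (degree_add_le _ _)
    rw [degree_X_pow, degree_X]
    apply max_lt
    · exact_mod_cast hp
    · exact degree_C_le.trans_lt (by exact_mod_cast Nat.lt_of_lt_of_le one_pos (le_of_lt hp))
  have : (X ^ p - X - C a : K[X]) = X ^ p - (X + C a) := by ring
  rw [this]
  exact (monic_X_pow p).sub_of_left h1

theorem natDegree_arts (K : Type*) [Field K] {p : ℕ} (hp : 1 < p) (a : K) :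
    (X ^ p - X - C a : K[X]).natDegree = p := by
  have h1 : ((X : K[X]) + C a).degree < ((X : K[X]) ^ p).degree := by
    apply lt_of_le_of_lt (degree_add_le _ _)
    rw [degree_X_pow, degree_X]
    apply max_lt
    · exact_mod_cast hp
    · exact degree_C_le.trans_lt (by exact_mod_cast Nat.lt_of_lt_of_le one_pos (le_of_lt hp))
  have h2 : (X ^ p - X - C a : K[X]) = X ^ p - (X + C a) := by ring
  rw [h2, natDegree_eq_of_degree_eq (degree_sub_eq_left_of_degree_lt h1), natDegree_X_pow]

theorem arts_factor_deg (K : Type*) [Field K] (p : ℕ) [Fact p.Prime] [CharP K p]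
    (a : K) (ha : ¬ ∃ x : K, x ^ p - x = a) (g : K[X]) (hg : g.Monic)
    (hgi : Irreducible g) (hdvd : g ∣ (X ^ p - X - C a)) : g.natDegree = p := by
  have hp1 : 1 < p := (Fact.out : p.Prime).one_lt
  set f : K[X] := X ^ p - X - C a with hf
  have hfm : f.Monic := monic_arts K hp1 a
  have hfd : f.natDegree = p := natDegree_arts K hp1 a
  have hf0 : f ≠ 0 := hfm.ne_zero
  set d := g.natDegree with hdd
  have hd_pos : 0 < d := hgi.natDegree_pos
  have hd_le : d ≤ p := hfd ▸ natDegree_le_of_dvd hdvd hf0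
  -- suffices p ∣ d
  suffices hpd : p ∣ d by exact Nat.le_antisymm hd_le (Nat.le_of_dvd hd_pos hpd)
  by_contra hnd
  letI : Fact (Irreducible g) := ⟨hgi⟩
  set L := AdjoinRoot g
  set β : L := AdjoinRoot.root g
  have hinj : Function.Injective (algebraMap K L) := (algebraMap K L).injective
  haveI : CharP L p := charP_of_injective_algebraMap hinj p
  have hβf : aeval β f = 0 := by
    rw [AdjoinRoot.aeval_eq, AdjoinRoot.mk_eq_zero]; exact hdvd
  have hroot : β ^ p - β = algebraMap K L a := by
    have : β ^ p - β - algebraMap K L a = 0 := by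
      simpa [hf, map_sub, AdjoinRoot.aeval_eq] using hβf
    linear_combination this
  -- the key factorization of f over L
  have key : f.map (algebraMap K L) =
      ∏ k : ZMod p, (X - C (β + ZMod.castHom (dvd_refl p) L k)) := by
    have h1 := congrArg (aeval (X - C β : L[X])) (prodL L p)
    rw [map_prod] at h1
    have h2 : ∀ k : ZMod p,
        aeval (X - C β : L[X]) (X - C (ZMod.castHom (dvd_refl p) L k)) =
          X - C (β + ZMod.castHom (dvd_refl p) L k) := by
      intro k
      simp [map_sub, aeval_X, aeval_C, algebraMap_eq]
      ring
    rw [Finset.prod_congr rfl (fun k _ => h2 k)] at h1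
    rw [h1]
    have h3 : aeval (X - C β : L[X]) (X ^ p - X : L[X]) = (X - C β) ^ p - (X - C β) := by
      simp [map_sub, aeval_X_pow, aeval_X]
    rw [h3]
    have h4 : ((X : L[X]) - C β) ^ p = X ^ p - C β ^ p := sub_pow_char _ _
    rw [h4]
    have h5 : (C β : L[X]) ^ p = C (β ^ p) := by rw [← C_pow]
    rw [h5, hf]
    push_cast [Polynomial.map_sub, Polynomial.map_pow, Polynomial.map_X, Polynomial.map_C]
    rw [← hroot]
    simp only [map_sub, map_add, map_neg]
    ring
  -- g is nonzero etc
  have hg0 : g ≠ 0 := hg.ne_zero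
  have hgm0 : g.map (algebraMap K L) ≠ 0 := (Polynomial.map_ne_zero_iff hinj).mpr hg0
  have hfm0 : f.map (algebraMap K L) ≠ 0 := (Polynomial.map_ne_zero_iff hinj).mpr hf0
  have hdvdL : g.map (algebraMap K L) ∣ f.map (algebraMap K L) := Polynomial.map_dvd _ hdvd
  -- f.map splits
  have hfsplits : Splits (f.map (algebraMap K L)) := by
    rw [key]
    exact Splits.prod (fun k _ => Splits.X_sub_C _)
  have hs : Splits (g.map (algebraMap K L)) :=
    hfsplits.of_dvd hfm0 hdvdL
  -- every root of g.map is of the form β + k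
  have hroots : ∀ r ∈ (g.map (algebraMap K L)).roots,
      ∃ k : ZMod p, r = β + ZMod.castHom (dvd_refl p) L k := by
    intro r hr
    have hr' : (f.map (algebraMap K L)).eval r = 0 := by
      obtain ⟨c, hc⟩ := hdvdL
      have h0 : eval r (g.map (algebraMap K L)) = 0 := isRoot_of_mem_roots hr
      rw [hc, eval_mul, h0, zero_mul]
    rw [key, eval_prod, Finset.prod_eq_zero_iff] at hr'
    obtain ⟨k, _, hk⟩ := hr'
    refine ⟨k, ?_⟩
    simpa [eval_sub, eval_X, eval_C, sub_eq_zero] using hk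
  -- sum of roots
  have hsum := hs.nextCoeff_eq_neg_sum_roots_of_monic (hg.map (algebraMap K L))
  have hcard : Multiset.card (g.map (algebraMap K L)).roots = d := by
    rw [(splits_iff_card_roots).mp hs, natDegree_map]
  -- work in the subfield F = range of algebraMap K L
  set F : Subfield L := (algebraMap K L).fieldRange with hF
  have hkmem : ∀ k : ZMod p, (ZMod.castHom (dvd_refl p) L k) ∈ F := by
    intro k
    refine ⟨ZMod.castHom (dvd_refl p) K k, ?_⟩
    simp [ZMod.castHom_apply]
    rw [← ZMod.natCast_val, ← ZMod.natCast_val, map_natCast]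
  have hnext : -(algebraMap K L (g.nextCoeff)) ∈ F := by
    exact neg_mem ⟨g.nextCoeff, rfl⟩
  -- sum of roots minus d • β is in F
  set m := (g.map (algebraMap K L)).roots with hm
  have hsub : ∀ r ∈ m, r - β ∈ F := by
    intro r hr
    obtain ⟨k, hk⟩ := hroots r hr
    rw [hk]
    simpa using hkmem k
  have hsum2 : m.sum - (Multiset.card m) • β ∈ F := by
    have : m.sum - (Multiset.card m) • β = (m.map (fun r => r - β)).sum := by
      induction m using Multiset.induction with
      | empty => simp
      | cons a s ih =>
        simp only [Multiset.sum_cons, Multiset.card_cons, Multiset.map_cons, succ_nsmul]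
        rw [← ih]
        ring
    rw [this]
    refine multiset_sum_mem _ ?_
    intro x hx
    obtain ⟨r, hr, rfl⟩ := Multiset.mem_map.mp hx
    exact hsub r hr
  have hdβ : (d : L) * β ∈ F := by
    have h1 : m.sum = -(algebraMap K L (g.nextCoeff)) := by
      have h := hsum
      rw [nextCoeff_map hinj] at h
      linear_combination h
    have h2 : (d : L) * β = m.sum - (m.sum - (Multiset.card m) • β) := by
      rw [hcard, nsmul_eq_mul]; ring
    rw [h2]
    exact sub_mem (by rw [h1]; exact hnext) hsum2
  have hdne : (d : L) ≠ 0 := by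
    rw [Ne, CharP.cast_eq_zero_iff L p]
    exact hnd
  have hβF : β ∈ F := by
    have : β = (d : L)⁻¹ * ((d : L) * β) := by rw [inv_mul_cancel_left₀ hdne]
    rw [this]
    exact mul_mem (inv_mem ⟨_, rfl⟩) hdβ
  obtain ⟨c, hc⟩ := hβF
  refine ha ⟨c, hinj ?_⟩
  rw [map_sub, map_pow, hc]
  exact hroot

theorem arts_irred (K : Type*) [Field K] (p : ℕ) [Fact p.Prime] [CharP K p]
    (a : K) (ha : ¬ ∃ x : K, x ^ p - x = a) :
    Irreducible (X ^ p - X - C a : K[X]) := by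
  have hp1 : 1 < p := (Fact.out : p.Prime).one_lt
  set f : K[X] := X ^ p - X - C a with hf
  have hfm : f.Monic := monic_arts K hp1 a
  have hfd : f.natDegree = p := natDegree_arts K hp1 a
  have hf0 : f ≠ 0 := hfm.ne_zero
  have hfu : ¬ IsUnit f := by
    intro hu
    have := natDegree_eq_zero_of_isUnit hu
    omega
  obtain ⟨q, hqirr, hqdvd⟩ := WfDvdMonoid.exists_irreducible_factor hfu hf0
  have hq0 : q ≠ 0 := hqirr.ne_zero
  set g := q * C (q.leadingCoeff)⁻¹ with hgdef
  have hgm : g.Monic := monic_mul_leadingCoeff_inv hq0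
  have hassoc : Associated q g := by
    refine associated_mul_unit_right q _ ?_
    exact isUnit_C.mpr (IsUnit.inv (isUnit_iff_ne_zero.mpr (leadingCoeff_ne_zero.mpr hq0)))
  have hgirr : Irreducible g := hassoc.irreducible hqirr
  have hgdvd : g ∣ f := hassoc.symm.dvd.trans hqdvd
  have hgd : g.natDegree = p := arts_factor_deg K p a ha g hgm hgirr hgdvd
  obtain ⟨c, hc⟩ := hgdvd
  have hc0 : c ≠ 0 := by
    intro h; rw [h, mul_zero] at hc; exact hf0 hc
  have hcd : c.natDegree = 0 := by
    have := natDegree_mul hgm.ne_zero hc0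
    rw [← hc, hfd, hgd] at this
    omega
  have hcu : c = 1 := by
    have hlc : f.leadingCoeff = g.leadingCoeff * c.leadingCoeff := by
      rw [hc, leadingCoeff_mul]
    rw [hfm.leadingCoeff, hgm.leadingCoeff, one_mul] at hlc
    have h00 : c.coeff 0 = 1 := by
      rw [← hcd]; exact hlc.symm
    rw [eq_C_of_natDegree_eq_zero hcd, h00, map_one]
  rw [hcu, mul_one] at hc
  rw [hc]
  exact hgirr

/-- For an Artin–Schreier extension `L = K[X]/(X^p - X - a)` with `θ` the class of `X`,
the family `θ_k = 1/(θ - k)` for `k ∈ F_p` is a `K`-basis of `L`, and the generator `σ`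
of `Gal(L/K)` with `σ(θ) = θ + 1` satisfies `σ(θ_k) = θ_{k-1}`: it is a normal basis. -/
theorem stmt_1 (K : Type*) [Field K] (p : ℕ) [Fact p.Prime] [CharP K p]
    (a : K) (ha : ¬ ∃ x : K, x ^ p - x = a) :
    ∃ hirr : Irreducible (X ^ p - X - C a : K[X]),
      letI : Fact (Irreducible (X ^ p - X - C a : K[X])) := ⟨hirr⟩
      ∀ Θ : ZMod p → AdjoinRoot (X ^ p - X - C a : K[X]),
        (∀ k : ZMod p, Θ k =
          (AdjoinRoot.root (X ^ p - X - C a : K[X]) -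
            algebraMap K (AdjoinRoot (X ^ p - X - C a : K[X]))
              (ZMod.castHom (dvd_refl p) K k))⁻¹) →
        (∃ B : Module.Basis (ZMod p) K (AdjoinRoot (X ^ p - X - C a : K[X])),
          ∀ k : ZMod p, B k = Θ k) ∧
        ∀ σ : AdjoinRoot (X ^ p - X - C a : K[X]) ≃ₐ[K]
            AdjoinRoot (X ^ p - X - C a : K[X]),
          σ (AdjoinRoot.root (X ^ p - X - C a : K[X])) =
              AdjoinRoot.root (X ^ p - X - C a : K[X]) + 1 →
          ∀ k : ZMod p, σ (Θ k) = Θ (k - 1) := by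
  have hp1 : 1 < p := (Fact.out : p.Prime).one_lt
  set f : K[X] := X ^ p - X - C a with hf
  have hirr : Irreducible f := arts_irred K p a ha
  refine ⟨hirr, ?_⟩
  letI : Fact (Irreducible f) := ⟨hirr⟩
  set L := AdjoinRoot f with hL
  set θ : L := AdjoinRoot.root f with hθdef
  set α : ZMod p → L := fun k => algebraMap K L (ZMod.castHom (dvd_refl p) K k) with hα
  intro Θ hΘ
  have hfm : f.Monic := monic_arts K hp1 a
  have hfd : f.natDegree = p := natDegree_arts K hp1 a
  have hf0 : f ≠ 0 := hfm.ne_zero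
  have hinj : Function.Injective (algebraMap K L) := (algebraMap K L).injective
  haveI : CharP L p := charP_of_injective_algebraMap hinj p
  have hθf : θ ^ p - θ = algebraMap K L a := by
    have h0 : aeval θ f = 0 := by rw [AdjoinRoot.aeval_eq, AdjoinRoot.mk_self]
    have : θ ^ p - θ - algebraMap K L a = 0 := by
      simpa [hf, map_sub] using h0
    linear_combination this
  have hαk : ∀ k : ZMod p, α k = ZMod.castHom (dvd_refl p) L k := by
    intro k
    simp only [hα, ZMod.castHom_apply]
    rw [← ZMod.natCast_val, ← ZMod.natCast_val, map_natCast]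
  have hprod_eval : (∏ k : ZMod p, (θ - α k)) = algebraMap K L a := by
    have h1 := congrArg (eval θ) (prodL L p)
    simp only [eval_prod, eval_sub, eval_X, eval_C, eval_pow] at h1
    rw [Finset.prod_congr rfl (fun k _ => by rw [hαk k]), h1, hθf]
  have ha' : a ≠ 0 := by
    intro h
    exact ha ⟨0, by simp [h, zero_pow (by omega : p ≠ 0)]⟩
  have ha0 : algebraMap K L a ≠ 0 := fun h => ha' (hinj (by simpa using h))
  have hne : ∀ k : ZMod p, θ - α k ≠ 0 := by
    intro k hk
    exact ha0 (hprod_eval ▸ Finset.prod_eq_zero (Finset.mem_univ k) hk)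
  have hΘ' : ∀ k : ZMod p, Θ k = (θ - α k)⁻¹ := hΘ
  -- linear independence
  have li : LinearIndependent K Θ := by
    rw [Fintype.linearIndependent_iff]
    intro c hc
    set P : K[X] := ∑ k : ZMod p, C (c k) *
      ∏ j ∈ Finset.univ.erase k, (X - C (ZMod.castHom (dvd_refl p) K j)) with hP
    have hterm : ∀ k : ZMod p,
        aeval θ (C (c k) * ∏ j ∈ Finset.univ.erase k,
          (X - C (ZMod.castHom (dvd_refl p) K j))) = algebraMap K L a * (c k • Θ k) := by
      intro k
      rw [map_mul, aeval_C, map_prod]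
      have h1 : ∀ j : ZMod p, aeval θ ((X : K[X]) - C (ZMod.castHom (dvd_refl p) K j))
          = θ - α j := by
        intro j; rw [map_sub, aeval_X, aeval_C]
      rw [Finset.prod_congr rfl fun j _ => h1 j]
      have h2 := Finset.mul_prod_erase Finset.univ (fun j => θ - α j) (Finset.mem_univ k)
      rw [hprod_eval] at h2
      have h3 : (∏ j ∈ Finset.univ.erase k, (θ - α j)) = algebraMap K L a * (θ - α k)⁻¹ := by
        rw [← h2, mul_comm (θ - α k), mul_assoc, mul_inv_cancel₀ (hne k), mul_one]
      rw [h3, hΘ' k, Algebra.smul_def]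
      ring
    have hPθ : aeval θ P = 0 := by
      rw [hP, map_sum, Finset.sum_congr rfl fun k _ => hterm k, ← Finset.mul_sum]
      have : ∑ k : ZMod p, c k • Θ k = 0 := hc
      rw [this, mul_zero]
    have hPdeg : P.natDegree < p := by
      have hle : P.natDegree ≤ p - 1 := by
        apply Polynomial.natDegree_sum_le_of_forall_le
        intro k _
        refine le_trans (natDegree_C_mul_le _ _) ?_
        have : (∏ j ∈ Finset.univ.erase k,
            ((X : K[X]) - C (ZMod.castHom (dvd_refl p) K j))).natDegree
            = (Finset.univ.erase k).card := by
          rw [natDegree_prod _ _ (fun j _ => X_sub_C_ne_zero _)]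
          simp [natDegree_X_sub_C]
        rw [this, Finset.card_erase_of_mem (Finset.mem_univ k), Finset.card_univ, ZMod.card]
      omega
    have hP0 : P = 0 := by
      by_contra hP0
      have hdvd : f ∣ P := by
        rw [← AdjoinRoot.mk_eq_zero, ← AdjoinRoot.aeval_eq]
        exact hPθ
      have := natDegree_le_of_dvd hdvd hP0
      omega
    intro k0
    have hev := congrArg (eval (ZMod.castHom (dvd_refl p) K k0)) hP0
    rw [hP, eval_zero, eval_finset_sum] at hev
    have hsingle : ∀ k : ZMod p, k ≠ k0 →
        eval (ZMod.castHom (dvd_refl p) K k0) (C (c k) *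
          ∏ j ∈ Finset.univ.erase k, (X - C (ZMod.castHom (dvd_refl p) K j))) = 0 := by
      intro k hk
      rw [eval_mul, eval_prod]
      have hmem : k0 ∈ Finset.univ.erase k := Finset.mem_erase.mpr ⟨Ne.symm hk, Finset.mem_univ _⟩
      rw [Finset.prod_eq_zero hmem (by simp), mul_zero]
    rw [Finset.sum_eq_single k0 (fun k _ hk => hsingle k hk) (by simp)] at hev
    rw [eval_mul, eval_C, eval_prod] at hev
    have hprod_ne : (∏ j ∈ Finset.univ.erase k0,
        eval (ZMod.castHom (dvd_refl p) K k0) ((X : K[X]) - C (ZMod.castHom (dvd_refl p) K j)))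
        ≠ 0 := by
      apply Finset.prod_ne_zero_iff.mpr
      intro j hj
      simp only [eval_sub, eval_X, eval_C, sub_ne_zero]
      intro heq
      exact (Finset.mem_erase.mp hj).1 ((ZMod.castHom (dvd_refl p) K).injective heq).symm
    have := mul_eq_zero.mp hev
    tauto
  -- basis
  have hfinrank : Module.finrank K L = p := by
    have h1 := PowerBasis.finrank (AdjoinRoot.powerBasis' hfm)
    rwa [show (AdjoinRoot.powerBasis' hfm).dim = f.natDegree from rfl, hfd] at h1
  have hcardfr : Fintype.card (ZMod p) = Module.finrank K L := by
    rw [ZMod.card, hfinrank]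
  refine ⟨⟨basisOfLinearIndependentOfCardEqFinrank li hcardfr, fun k => by
    rw [coe_basisOfLinearIndependentOfCardEqFinrank]⟩, ?_⟩
  intro σ hσ k
  rw [hΘ' k, hΘ' (k - 1), map_inv₀, map_sub, hσ]
  have hcomm : σ (α k) = α k := by
    simp only [hα]
    exact σ.commutes _
  rw [hcomm]
  congr 1
  have hc1 : (ZMod.castHom (dvd_refl p) K) (k - 1) = (ZMod.castHom (dvd_refl p) K) k - 1 := by
    rw [map_sub, map_one]
  simp only [hα, hc1, map_sub, map_one]
  ring
end

section
/- Let K be a field of characteristic p > 0 and let R ∈ K be an element not lying in the prime field F_p ⊂ K. Then the element Σ_{k ∈ Z/pZ} (R + k)^{−1} · e_k of the group algebra K[Z/pZ] (where e_k denotes the basis element indexed by k) is a unit; equivalently, the vector ((R + k)^{−1})_{k ∈ Z/pZ} is invertible for the convolution product on K^{Z/pZ}. -/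
open Polynomial Finset

theorem aux_prod (p : ℕ) [Fact p.Prime] :
    (∏ a : ZMod p, (X - C a)) = X ^ p - X := by
  have hq : Fintype.card (ZMod p) = p := ZMod.card p
  have hmonic : (X ^ p - X : (ZMod p)[X]).Monic := by
    apply (monic_X_pow p).sub_of_left
    rw [degree_X_pow, degree_X]
    exact_mod_cast (Fact.out : p.Prime).one_lt
  have hroots : (X ^ p - X : (ZMod p)[X]).roots = Finset.univ.val := by
    have := FiniteField.roots_X_pow_card_sub_X (ZMod p)
    rwa [hq] at this
  have hcard : Multiset.card (X ^ p - X : (ZMod p)[X]).roots = (X ^ p - X : (ZMod p)[X]).natDegree := by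
    rw [hroots, FiniteField.X_pow_card_sub_X_natDegree_eq _ (Fact.out : p.Prime).one_lt]
    simp [hq]
  have := prod_multiset_X_sub_C_of_monic_of_roots_card_eq hmonic hcard
  rw [hroots] at this
  rw [← this]
  rfl

-- scalar lemma
theorem aux_sum (K : Type*) [Field K] (p : ℕ) [Fact p.Prime] [CharP K p]
    (S : K) (hS : ∀ k : ZMod p, S + ZMod.castHom (dvd_refl p) K k ≠ 0) :
    (∑ k : ZMod p, (S + ZMod.castHom (dvd_refl p) K k)⁻¹) ≠ 0 := by
  set φ := ZMod.castHom (dvd_refl p) K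
  -- the polynomial ∏ (X + C (φ k)) = X^p - X over K
  have hP : (∏ k : ZMod p, (X + C (φ k))) = X ^ p - X := by
    have h1 : (∏ k : ZMod p, (X + C (φ k))) = ∏ k : ZMod p, (X - C (φ k)) := by
      refine Fintype.prod_equiv (Equiv.neg (ZMod p)) _ _ fun k => ?_
      simp [sub_eq_add_neg]
    rw [h1]
    have := congrArg (Polynomial.map φ) (aux_prod p)
    simpa [Polynomial.map_prod] using this
  -- derivative
  have hD : derivative (∏ k : ZMod p, (X + C (φ k))) = -1 := by
    rw [hP]
    simp [derivative_X_pow, CharP.cast_eq_zero K p]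
  have hgen : derivative (∏ k : ZMod p, (X + C (φ k)))
      = ∑ k : ZMod p, (∏ j ∈ univ.erase k, (X + C (φ j))) * derivative (X + C (φ k)) := by
    rw [Finset.prod_eq_multiset_prod, derivative_prod, Finset.sum_eq_multiset_sum]
    refine congrArg Multiset.sum (Multiset.map_congr rfl fun i _ => ?_)
    rw [Finset.prod_eq_multiset_prod, Finset.erase_val]
  have hD2 : ∑ k : ZMod p, (∏ j ∈ univ.erase k, (X + C (φ j))) = (-1 : K[X]) := by
    rw [← hD, hgen]
    simp
  -- evaluate at S
  have hEv : ∑ k : ZMod p, (∏ j ∈ univ.erase k, (S + φ j)) = (-1 : K) := by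
    have := congrArg (Polynomial.eval S) hD2
    simpa [eval_finset_sum, eval_prod] using this
  intro h0
  have : (∑ k : ZMod p, (S + φ k)⁻¹) * (∏ j : ZMod p, (S + φ j)) = 0 := by rw [h0, zero_mul]
  rw [Finset.sum_mul] at this
  have heach : ∀ k : ZMod p, (S + φ k)⁻¹ * (∏ j : ZMod p, (S + φ j))
      = ∏ j ∈ univ.erase k, (S + φ j) := by
    intro k
    rw [← Finset.mul_prod_erase univ _ (mem_univ k), ← mul_assoc, inv_mul_cancel₀ (hS k), one_mul]
  rw [Finset.sum_congr rfl fun k _ => heach k, hEv] at this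
  exact one_ne_zero (neg_eq_zero.mp this)



/-- If `K` has characteristic `p > 0` and `R ∈ K` does not lie in the prime field `F_p`,
then `Σ_{k ∈ Z/pZ} (R + k)⁻¹ · e_k` is a unit of the group algebra `K[Z/pZ]`, i.e. the
vector `((R + k)⁻¹)_k` is invertible for the convolution product. -/
theorem stmt_3 (K : Type*) [Field K] (p : ℕ) [Fact p.Prime] [CharP K p]
    (R : K) (hR : R ∉ Set.range (Nat.cast : ℕ → K)) :
    IsUnit ((∑ k : ZMod p,
        AddMonoidAlgebra.single k ((R + ZMod.castHom (dvd_refl p) K k)⁻¹)) :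
      AddMonoidAlgebra K (ZMod p)) := by
  set φ := ZMod.castHom (dvd_refl p) K with hφ
  have hp : p.Prime := Fact.out
  have hφval : ∀ m : ZMod p, φ m = ((m.val : ℕ) : K) := by
    intro m
    rw [← map_natCast φ m.val, ZMod.natCast_val, ZMod.cast_id]
  -- R^p + φ k ≠ 0 for all k
  have hS : ∀ k : ZMod p, R ^ p + φ k ≠ 0 := by
    intro k h
    apply hR
    have : (R - φ (-k)) ^ p = 0 := by
      rw [sub_pow_char, ← map_pow, ZMod.pow_card]
      rw [map_neg]
      linear_combination h
    have hRk : R = φ (-k) :=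
      sub_eq_zero.mp (pow_eq_zero_iff (n := p) hp.ne_zero |>.mp this)
    exact ⟨(-k).val, by rw [hRk, hφval]⟩
  set A := AddMonoidAlgebra K (ZMod p)
  haveI : CharP A p := charP_of_injective_algebraMap (algebraMap K A).injective p
  -- compute the p-th power
  have hpow : (∑ k : ZMod p, (AddMonoidAlgebra.single k ((R + φ k)⁻¹) : A)) ^ p
      = AddMonoidAlgebra.single (0 : ZMod p) (∑ k : ZMod p, (R ^ p + φ k)⁻¹) := by
    rw [sum_pow_char]
    have hterm : ∀ k : ZMod p, (AddMonoidAlgebra.single k ((R + φ k)⁻¹) : A) ^ p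
        = AddMonoidAlgebra.single (0 : ZMod p) ((R ^ p + φ k)⁻¹) := by
      intro k
      rw [AddMonoidAlgebra.single_pow]
      congr 1
      · simp [nsmul_eq_mul, ZMod.natCast_self]
      · rw [inv_pow, add_pow_char, ← map_pow, ZMod.pow_card]
    rw [Finset.sum_congr rfl fun k _ => hterm k]
    exact (map_sum (AddMonoidAlgebra.singleAddHom (0 : ZMod p)) _ _).symm
  have hc : (∑ k : ZMod p, (R ^ p + φ k)⁻¹) ≠ 0 := aux_sum K p (R ^ p) hS
  have hunit : IsUnit ((∑ k : ZMod p,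
      (AddMonoidAlgebra.single k ((R + φ k)⁻¹) : A)) ^ p) := by
    rw [hpow]
    refine IsUnit.of_mul_eq_one (AddMonoidAlgebra.single 0 ((∑ k : ZMod p, (R ^ p + φ k)⁻¹)⁻¹)) ?_
    rw [AddMonoidAlgebra.single_mul_single, mul_inv_cancel₀ hc, add_zero,
      ← AddMonoidAlgebra.one_def]
  exact isUnit_of_dvd_unit (dvd_pow_self _ hp.ne_zero) hunit
end

section
/- Let K be a field of characteristic p > 0, let a ∈ K with a not in {x^p − x | x ∈ K}, let L = K[X]/(X^p − X − a), θ the class of X, and θ_k = 1/(θ − k) for k ∈ Z/pZ, so that Θ = (θ_k)_k is a normal basis of L/K. Let ī ∈ K^{Z/pZ} be the coordinate vector of θ_0^2 in Θ. Fix R ∈ K not in F_p and set u_R = ((R + k)^{−1})_{k ∈ Z/pZ} and w_R = ((R + k)^{−2})_{k ∈ Z/pZ}; let u_R^{−1} denote the inverse of u_R for the convolution product. Then for all vectors α, β ∈ K^{Z/pZ}, the coordinate vector in Θ of the product (Σ_i α_i θ_i) · (Σ_j β_j θ_j) equals ī ⋆ (α ⋄ β) + u_R^{−1} ⋆ ( (u_R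 ⋆ α) ⋄ (u_R ⋆ β) − w_R ⋆ (α ⋄ β) ). -/
open Polynomial

/-- The convolution product of two vectors indexed by `Z/nZ`. -/
noncomputable def conv {K : Type*} [CommRing K] {n : ℕ} [NeZero n]
    (α β : ZMod n → K) : ZMod n → K :=
  fun k => ∑ i : ZMod n, α i * β (k - i)


set_option linter.unusedSectionVars false
set_option linter.unusedVariables false

lemma inv_mul_inv_eq {K : Type*} [Field K] {A B : K} (hA : A ≠ 0) (hB : B ≠ 0)
    (hAB : A - B ≠ 0) : A⁻¹ * B⁻¹ = (A - B)⁻¹ * (B⁻¹ - A⁻¹) := by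
  field_simp

lemma conv_comm' {K : Type*} [CommRing K] {n : ℕ} [NeZero n]
    (α β : ZMod n → K) : conv α β = conv β α := by
  funext k
  exact Fintype.sum_equiv (Equiv.subLeft k) _ _
    (fun i => by simp only [Equiv.subLeft_apply, sub_sub_cancel]; ring)

lemma conv_apply {K : Type*} [CommRing K] {n : ℕ} [NeZero n]
    (α β : ZMod n → K) (k : ZMod n) : conv α β k = ∑ i : ZMod n, α i * β (k - i) := rfl

lemma pf_root {F : Type*} [Field F] (p : ℕ) [Fact p.Prime] [CharP F p] {y : F}
    (hy : y ^ p = y) : ∃ n : ZMod p, y = ZMod.castHom (dvd_refl p) F n := by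
  classical
  have hp1 : 1 < p := (Fact.out : p.Prime).one_lt
  set ψ : ZMod p →+* F := ZMod.castHom (dvd_refl p) F with hψ
  have hinj : Function.Injective ψ := ψ.injective
  set q : F[X] := X ^ p - X with hqdef
  have hq : q ≠ 0 := FiniteField.X_pow_card_sub_X_ne_zero F hp1
  have hdeg : q.natDegree = p := FiniteField.X_pow_card_sub_X_natDegree_eq F hp1
  have hroot : ∀ z : F, z ^ p = z → z ∈ q.roots := by
    intro z hz
    rw [mem_roots hq]
    simp [hqdef, IsRoot, hz]
  have hmem : ∀ n : ZMod p, ψ n ∈ q.roots := by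
    intro n
    apply hroot
    rw [← map_pow, ZMod.pow_card]
  have hsub : Finset.image ψ Finset.univ ⊆ q.roots.toFinset := by
    intro x hx
    simp only [Finset.mem_image] at hx
    obtain ⟨n, -, rfl⟩ := hx
    exact Multiset.mem_toFinset.mpr (hmem n)
  have hcard1 : (Finset.image ψ Finset.univ).card = p := by
    rw [Finset.card_image_of_injective _ hinj, Finset.card_univ, ZMod.card]
  have hcard2 : q.roots.toFinset.card ≤ p := by
    calc q.roots.toFinset.card ≤ Multiset.card q.roots := q.roots.toFinset_card_le
    _ ≤ q.natDegree := q.card_roots'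
    _ = p := hdeg
  have heq : Finset.image ψ Finset.univ = q.roots.toFinset :=
    Finset.eq_of_subset_of_card_le hsub (by rw [hcard1]; exact hcard2)
  have hy' : y ∈ Finset.image ψ Finset.univ := by
    rw [heq, Multiset.mem_toFinset]
    exact hroot y hy
  simp only [Finset.mem_image] at hy'
  obtain ⟨n, -, h⟩ := hy'
  exact ⟨n, h.symm⟩

lemma AS_deg_lt {K : Type*} [Field K] (p : ℕ) (hp1 : 1 < p) (a : K) :
    (X + C a : K[X]).degree < (p : WithBot ℕ) := by
  apply lt_of_le_of_lt (degree_add_le _ _)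
  simp only [degree_X, max_lt_iff]
  refine ⟨by exact_mod_cast hp1, lt_of_le_of_lt degree_C_le ?_⟩
  exact_mod_cast Nat.lt_of_lt_of_le Nat.zero_lt_one hp1.le

lemma AS_monic {K : Type*} [Field K] (p : ℕ) [Fact p.Prime] (a : K) :
    (X ^ p - X - C a : K[X]).Monic := by
  have hp1 : 1 < p := (Fact.out : p.Prime).one_lt
  have h : (X ^ p - X - C a : K[X]) = X ^ p - (X + C a) := by ring
  rw [h]
  exact monic_X_pow_sub (by simpa using (AS_deg_lt p hp1 a))

lemma AS_natDegree {K : Type*} [Field K] (p : ℕ) [Fact p.Prime] (a : K) :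
    (X ^ p - X - C a : K[X]).natDegree = p := by
  have hp1 : 1 < p := (Fact.out : p.Prime).one_lt
  have h : (X ^ p - X - C a : K[X]) = X ^ p - (X + C a) := by ring
  rw [h]
  have h1 : (X + C a : K[X]).degree < (X ^ p : K[X]).degree := by
    rw [degree_X_pow]; exact AS_deg_lt p hp1 a
  rw [natDegree_eq_of_degree_eq (degree_sub_eq_left_of_degree_lt h1), natDegree_X_pow]

lemma AS_irreducible {K : Type*} [Field K] (p : ℕ) [Fact p.Prime] [CharP K p]
    (a : K) (ha : ¬ ∃ x : K, x ^ p - x = a) :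
    Irreducible (X ^ p - X - C a : K[X]) := by
  classical
  have hp : p.Prime := Fact.out
  have hp1 : 1 < p := hp.one_lt
  set f : K[X] := X ^ p - X - C a with hfdef
  have hmono : f.Monic := AS_monic p a
  have hfdeg : f.natDegree = p := AS_natDegree p a
  have hf0 : f ≠ 0 := hmono.ne_zero
  set F := AlgebraicClosure K with hF
  set φ : K →+* F := algebraMap K F with hφ
  haveI : CharP F p := charP_of_injective_algebraMap (algebraMap K F).injective p
  have hφi : Function.Injective φ := φ.injective
  have hdeg0 : f.degree ≠ 0 := by
    rw [degree_eq_natDegree hf0, hfdeg]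
    exact_mod_cast hp.ne_zero
  obtain ⟨θ, hθ⟩ := IsAlgClosed.exists_aeval_eq_zero F f hdeg0
  -- aeval of f
  have haev : ∀ z : F, aeval z f = z ^ p - z - φ a := by
    intro z; simp [hfdef, hφ]
  have hθ' : θ ^ p - θ - φ a = 0 := by rw [← haev]; exact hθ
  have hint : IsIntegral K θ := ⟨f, hmono, hθ⟩
  set g0 : K[X] := minpoly K θ with hg0
  have hg0monic : g0.Monic := minpoly.monic hint
  have hdvd : g0 ∣ f := minpoly.dvd K θ hθ
  have hirr0 : Irreducible g0 := minpoly.irreducible hint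
  set d : ℕ := g0.natDegree with hd
  have hdle : d ≤ p := hfdeg ▸ natDegree_le_of_dvd hdvd hf0
  have hdpos : 0 < d := minpoly.natDegree_pos hint
  -- key claim: d = p
  have hdp : d = p := by
    by_contra hne
    have hdlt : d < p := lt_of_le_of_ne hdle hne
    -- work with g = g0.map φ
    set g : F[X] := g0.map φ with hg
    have hgmonic : g.Monic := hg0monic.map φ
    have hsplit : Splits g := IsAlgClosed.splits g
    have hsum : g.roots.sum = -g.nextCoeff := by
      rw [hsplit.nextCoeff_eq_neg_sum_roots_of_monic hgmonic, neg_neg]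
    have hcard : g.roots.card = d := by
      have := (IsAlgClosed.splits g).natDegree_eq_card_roots
      rw [← this, hg, natDegree_map]
    -- each root of g is θ + (element of prime field)
    have hrootform : ∀ z ∈ g.roots, ∃ c : K, z = θ + φ c := by
      intro z hz
      have hz0 : aeval z g0 = 0 := by
        rw [mem_roots (hgmonic.ne_zero)] at hz
        rw [aeval_def, ← eval_map]; exact hz
      have hzf : aeval z f = 0 := by
        obtain ⟨q, hq⟩ := hdvd
        rw [hq, map_mul, hz0, zero_mul]
      have hzf' : z ^ p - z - φ a = 0 := by rw [← haev]; exact hzf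
      have hy : (z - θ) ^ p = z - θ := by
        rw [sub_pow_char]
        have h1 : z ^ p = z + φ a := by linear_combination hzf'
        have h2 : θ ^ p = θ + φ a := by linear_combination hθ'
        rw [h1, h2]; ring
      obtain ⟨n, hn⟩ := pf_root p hy
      refine ⟨ZMod.castHom (dvd_refl p) K n, ?_⟩
      have : φ (ZMod.castHom (dvd_refl p) K n) = ZMod.castHom (dvd_refl p) F n := by
        have : φ.comp (ZMod.castHom (dvd_refl p) K) = ZMod.castHom (dvd_refl p) F :=
          RingHom.ext_zmod _ _
        rw [← this]; rfl
      rw [this, ← hn]; ring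
    -- sum of roots
    set M : Multiset F := g.roots.map (fun z => z - θ) with hM
    have hMmem : ∀ y ∈ M, y ∈ φ.range := by
      intro y hy
      rw [hM, Multiset.mem_map] at hy
      obtain ⟨z, hz, rfl⟩ := hy
      obtain ⟨c, hc⟩ := hrootform z hz
      exact ⟨c, by rw [hc]; ring⟩
    have hMsum : M.sum ∈ φ.range := Subring.multiset_sum_mem _ _ hMmem
    have hMsum' : M.sum = g.roots.sum - d • θ := by
      rw [hM, Multiset.sum_map_sub]
      simp [hcard]
    -- nextCoeff of g is in range
    have hnext : g.nextCoeff = φ g0.nextCoeff := nextCoeff_map hφi g0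
    have hsum_range : g.roots.sum ∈ φ.range := by
      rw [hsum, hnext]; exact ⟨-g0.nextCoeff, by simp⟩
    have hdθ : (d : F) * θ ∈ φ.range := by
      have heq2 : (d : F) * θ = g.roots.sum - M.sum := by
        rw [hMsum', nsmul_eq_mul]; ring
      rw [heq2]
      exact Subring.sub_mem _ hsum_range hMsum
    obtain ⟨t, ht⟩ := hdθ
    have hdK : (d : K) ≠ 0 := by
      rw [Ne, CharP.cast_eq_zero_iff K p]
      exact Nat.not_dvd_of_pos_of_lt hdpos hdlt
    have hdF : (d : F) ≠ 0 := by
      rw [← map_natCast φ]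
      simp only [Ne, map_eq_zero_iff φ hφi]
      exact hdK
    have hθK : θ = φ (t / d) := by
      rw [map_div₀, ht, map_natCast, mul_div_cancel_left₀ _ hdF]
    apply ha
    refine ⟨t / d, hφi ?_⟩
    have hfin := hθ'
    rw [hθK] at hfin
    rw [map_sub, map_pow]
    linear_combination hfin
  -- now g0 = f, so f irreducible
  obtain ⟨q, hq⟩ := hdvd
  have hq0 : q ≠ 0 := by rintro rfl; rw [mul_zero] at hq; exact hf0 hq
  have hg00 : g0 ≠ 0 := hg0monic.ne_zero
  have hnd : q.natDegree = 0 := by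
    have := natDegree_mul hg00 hq0
    rw [← hq, hfdeg] at this
    have h2 : p = d + q.natDegree := this
    rw [hdp] at h2
    omega
  have hqC : q = C (q.coeff 0) := eq_C_of_natDegree_eq_zero hnd
  have hlc : q.coeff 0 = 1 := by
    have := hmono
    rw [hq, hqC] at this
    have h2 := this.leadingCoeff
    rwa [leadingCoeff_mul, hg0monic.leadingCoeff, one_mul, leadingCoeff_C] at h2
  have : f = g0 := by rw [hq, hqC, hlc, map_one, mul_one]
  rw [this]; exact hirr0

section Key
variable {K : Type*} [Field K] (p : ℕ) [Fact p.Prime] [CharP K p] (a : K)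
variable [Fact (Irreducible (X ^ p - X - C a : K[X]))]

local notation "L" => AdjoinRoot (X ^ p - X - C a : K[X])
local notation "φL" => algebraMap K (AdjoinRoot (X ^ p - X - C a : K[X]))
local notation "cK" => ZMod.castHom (dvd_refl p) K
local notation "rr" => AdjoinRoot.root (X ^ p - X - C a : K[X])

lemma AS_charP : CharP L p :=
  charP_of_injective_algebraMap (algebraMap K L).injective p

lemma AS_root_eq : rr ^ p - rr - φL a = 0 := by
  have h0 : aeval rr (X ^ p - X - C a : K[X]) = 0 := by
    rw [AdjoinRoot.aeval_eq, AdjoinRoot.mk_self]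
  simpa [map_sub, map_pow] using h0

lemma AS_root_sub_ne (ha : ¬ ∃ x : K, x ^ p - x = a) (m : ZMod p) :
    rr - φL (cK m) ≠ 0 := by
  intro h
  apply ha
  refine ⟨cK m, (algebraMap K L).injective ?_⟩
  have h1 : rr = φL (cK m) := by linear_combination h
  rw [map_sub, map_pow, ← h1]
  linear_combination (AS_root_eq p a)

lemma AS_aeval_shift (c : ZMod p) : aeval (rr + φL (cK c)) (X ^ p - X - C a : K[X]) = 0 := by
  haveI := AS_charP p a
  simp only [map_sub, map_pow, aeval_X, aeval_C]
  rw [add_pow_char]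
  have hxp : (φL (cK c)) ^ p = φL (cK c) := by
    rw [← map_pow, ← map_pow, ZMod.pow_card]
  rw [hxp]
  linear_combination (AS_root_eq p a)

/-- The shift automorphism. -/
noncomputable def ASshift (c : ZMod p) : L →ₐ[K] L :=
  AdjoinRoot.liftAlgHom _ (Algebra.ofId K L) (rr + φL (cK c)) (AS_aeval_shift p a c)

lemma ASshift_root (c : ZMod p) : ASshift p a c rr = rr + φL (cK c) :=
  AdjoinRoot.liftAlgHom_root _ _ _ _

lemma ASshift_theta (Θ : ZMod p → L)
    (hΘ : ∀ k : ZMod p, Θ k = (rr - φL (cK k))⁻¹) (c m : ZMod p) :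
    ASshift p a c (Θ m) = Θ (m - c) := by
  rw [hΘ m, map_inv₀, map_sub, ASshift_root, AlgHom.commutes, hΘ (m - c)]
  congr 1
  simp only [map_sub]
  ring

lemma AS_key_sq (ha : ¬ ∃ x : K, x ^ p - x = a) (Θ : ZMod p → L)
    (hΘ : ∀ k : ZMod p, Θ k = (rr - φL (cK k))⁻¹)
    (B : Module.Basis (ZMod p) K L) (hB : ∀ k : ZMod p, B k = Θ k)
    (ii : ZMod p → K) (hii : ∀ k : ZMod p, ii k = B.repr (Θ 0 ^ 2) k)
    (i k : ZMod p) : B.repr (Θ i * Θ i) k = ii (k - i) := by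
  have hbase : Θ 0 ^ 2 = ∑ m : ZMod p, ii m • Θ m := by
    have h := B.sum_repr (Θ 0 ^ 2)
    rw [← h]
    exact Finset.sum_congr rfl fun m _ => by rw [hii, hB]
  have h1 : Θ i ^ 2 = ∑ m : ZMod p, ii m • Θ (m + i) := by
    have h2 : ASshift p a (-i) (Θ 0 ^ 2) = Θ i ^ 2 := by
      rw [map_pow, ASshift_theta p a Θ hΘ, zero_sub, neg_neg]
    rw [← h2, hbase, map_sum]
    exact Finset.sum_congr rfl fun m _ => by
      rw [map_smul, ASshift_theta p a Θ hΘ, sub_neg_eq_add]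
  have h3 : Θ i ^ 2 = ∑ n : ZMod p, ii (n - i) • B n := by
    rw [h1]
    refine Fintype.sum_equiv (Equiv.addRight i) _ _ fun m => by
      rw [Equiv.coe_addRight, add_sub_cancel_right, hB]
  have h4 : Θ i * Θ i = Θ i ^ 2 := (sq (Θ i)).symm
  rw [h4, h3]
  have := B.repr_sum_self (fun n => ii (n - i))
  exact congrFun this k

lemma AS_key_offdiag (ha : ¬ ∃ x : K, x ^ p - x = a) (Θ : ZMod p → L)
    (hΘ : ∀ k : ZMod p, Θ k = (rr - φL (cK k))⁻¹)
    (B : Module.Basis (ZMod p) K L) (hB : ∀ k : ZMod p, B k = Θ k)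
    (i j k : ZMod p) (hij : i ≠ j) :
    B.repr (Θ i * Θ j) k =
      (cK j - cK i)⁻¹ * ((if j = k then 1 else 0) - (if i = k then 1 else 0)) := by
  classical
  have hc : (cK j - cK i : K) ≠ 0 := by
    intro h
    apply hij
    apply (ZMod.castHom (dvd_refl p) K).injective
    linear_combination -h
  have hA := AS_root_sub_ne p a ha i
  have hB' := AS_root_sub_ne p a ha j
  have hAB : (rr - φL (cK i)) - (rr - φL (cK j)) = φL (cK j - cK i) := by
    rw [map_sub]; ring
  have hABne : (rr - φL (cK i)) - (rr - φL (cK j)) ≠ 0 := by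
    rw [hAB]
    simp only [Ne, map_eq_zero_iff _ (algebraMap K L).injective]
    exact hc
  have hmul : Θ i * Θ j = (cK j - cK i)⁻¹ • (Θ j - Θ i) := by
    rw [hΘ i, hΘ j, Algebra.smul_def, map_inv₀, ← hAB]
    have := inv_mul_inv_eq hA hB' hABne
    rw [this]
  rw [hmul, map_smul, map_sub, Finsupp.smul_apply, Finsupp.sub_apply, smul_eq_mul]
  congr 2
  · rw [← hB j, Module.Basis.repr_self_apply]
  · rw [← hB i, Module.Basis.repr_self_apply]

end Key

set_option maxHeartbeats 1000000 in
/-- FFT-like multiplication formula in the Artin–Schreier normal basis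
`θ_k = 1/(θ - k)`: the coordinate vector of `(Σ α_i θ_i)(Σ β_j θ_j)` equals
`ī ⋆ (α ⋄ β) + u_R⁻¹ ⋆ ((u_R ⋆ α) ⋄ (u_R ⋆ β) - w_R ⋆ (α ⋄ β))`. -/
theorem stmt_4 (K : Type*) [Field K] (p : ℕ) [Fact p.Prime] [CharP K p]
    (a : K) (ha : ¬ ∃ x : K, x ^ p - x = a)
    (R : K) (hR : R ∉ Set.range (Nat.cast : ℕ → K)) :
    ∃ hirr : Irreducible (X ^ p - X - C a : K[X]),
      letI : Fact (Irreducible (X ^ p - X - C a : K[X])) := ⟨hirr⟩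
      ∀ Θ : ZMod p → AdjoinRoot (X ^ p - X - C a : K[X]),
        (∀ k : ZMod p, Θ k =
          (AdjoinRoot.root (X ^ p - X - C a : K[X]) -
            algebraMap K (AdjoinRoot (X ^ p - X - C a : K[X]))
              (ZMod.castHom (dvd_refl p) K k))⁻¹) →
        ∀ B : Module.Basis (ZMod p) K (AdjoinRoot (X ^ p - X - C a : K[X])),
          (∀ k : ZMod p, B k = Θ k) →
          ∀ ii : ZMod p → K, (∀ k : ZMod p, ii k = B.repr (Θ 0 ^ 2) k) →
          ∀ uR wR : ZMod p → K,
            (∀ k : ZMod p, uR k = (R + ZMod.castHom (dvd_refl p) K k)⁻¹) →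
            (∀ k : ZMod p, wR k = (R + ZMod.castHom (dvd_refl p) K k)⁻¹ ^ 2) →
            ∀ uRinv : ZMod p → K,
              conv uR uRinv = (fun k => if k = 0 then 1 else 0) →
              ∀ α β : ZMod p → K, ∀ k : ZMod p,
                B.repr ((∑ i : ZMod p, α i • Θ i) * (∑ j : ZMod p, β j • Θ j)) k =
                  conv ii (α * β) k +
                    conv uRinv
                      (conv uR α * conv uR β - conv wR (α * β)) k := by
  classical
  refine ⟨AS_irreducible p a ha, ?_⟩
  letI : Fact (Irreducible (X ^ p - X - C a : K[X])) := ⟨AS_irreducible p a ha⟩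
  intro Θ hΘ B hB ii hii uR wR hu hw uRinv huRinv α β k
  -- basic facts in K
  have hRne : ∀ m : ZMod p, R + ZMod.castHom (dvd_refl p) K m ≠ 0 := by
    intro m h
    apply hR
    refine ⟨(-m).val, ?_⟩
    have : R = ZMod.castHom (dvd_refl p) K (-m) := by
      rw [map_neg]; linear_combination h
    rw [this, ZMod.castHom_apply, ZMod.natCast_val]
  have hwu : ∀ m : ZMod p, wR m = uR m * uR m := by
    intro m; rw [hw, hu, sq]
  -- the kernel
  set KER : ZMod p → ZMod p → K := fun i j =>
    (if i = j then ii (k - i) else 0) +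
      ∑ m : ZMod p, uRinv m *
        (uR (k - m - i) * uR (k - m - j) - (if i = j then wR (k - m - i) else 0))
    with hKER
  -- key identity
  have key : ∀ i j : ZMod p, B.repr (Θ i * Θ j) k = KER i j := by
    intro i j
    by_cases hij : i = j
    · subst hij
      rw [hKER]
      simp only [eq_self_iff_true, if_true]
      have hz : ∀ m : ZMod p,
          uRinv m * (uR (k - m - i) * uR (k - m - i) - wR (k - m - i)) = 0 := by
        intro m; rw [hwu]; ring
      rw [Finset.sum_congr rfl (fun m _ => hz m), Finset.sum_const_zero, add_zero]
      exact AS_key_sq p a ha Θ hΘ B hB ii hii i k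
    · rw [hKER]
      simp only [if_neg hij]
      rw [zero_add]
      have hc : (ZMod.castHom (dvd_refl p) K j - ZMod.castHom (dvd_refl p) K i : K) ≠ 0 := by
        intro h
        apply hij
        apply (ZMod.castHom (dvd_refl p) K).injective
        linear_combination -h
      have hpoint : ∀ m : ZMod p,
          uRinv m * (uR (k - m - i) * uR (k - m - j) - 0) =
          (ZMod.castHom (dvd_refl p) K j - ZMod.castHom (dvd_refl p) K i)⁻¹ *
            (uRinv m * uR (k - j - m) - uRinv m * uR (k - i - m)) := by
        intro m
        have hA := hRne (k - m - i)
        have hB2 := hRne (k - m - j)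
        have hAB : (R + ZMod.castHom (dvd_refl p) K (k - m - i)) -
            (R + ZMod.castHom (dvd_refl p) K (k - m - j)) =
            ZMod.castHom (dvd_refl p) K j - ZMod.castHom (dvd_refl p) K i := by
          simp only [map_sub]; ring
        have hABne : (R + ZMod.castHom (dvd_refl p) K (k - m - i)) -
            (R + ZMod.castHom (dvd_refl p) K (k - m - j)) ≠ 0 := by rw [hAB]; exact hc
        have h1 := inv_mul_inv_eq hA hB2 hABne
        rw [hu (k - m - i), hu (k - m - j), sub_zero, h1, hAB]
        have e1 : k - m - i = k - i - m := by ring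
        have e2 : k - m - j = k - j - m := by ring
        rw [hu (k - j - m), hu (k - i - m), ← e1, ← e2]
        ring
      rw [Finset.sum_congr rfl (fun m _ => hpoint m)]
      rw [← Finset.mul_sum, Finset.sum_sub_distrib]
      have hconv : ∀ n : ZMod p, (∑ m : ZMod p, uRinv m * uR (n - m)) =
          (if n = 0 then (1:K) else 0) := by
        intro n
        have : (∑ m : ZMod p, uRinv m * uR (n - m)) = conv uRinv uR n := rfl
        rw [this, conv_comm', huRinv]
      rw [hconv (k - j), hconv (k - i)]
      rw [AS_key_offdiag p a ha Θ hΘ B hB i j k hij]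
      congr 2
      · simp [sub_eq_zero, eq_comm]
      · simp [sub_eq_zero, eq_comm]
    -- LHS expansion
  have hLHS : B.repr ((∑ i : ZMod p, α i • Θ i) * (∑ j : ZMod p, β j • Θ j)) k
      = ∑ i : ZMod p, ∑ j : ZMod p, α i * β j * (B.repr (Θ i * Θ j) k) := by
    rw [Finset.sum_mul_sum, map_sum, Finsupp.finset_sum_apply]
    refine Finset.sum_congr rfl fun i _ => ?_
    rw [map_sum, Finsupp.finset_sum_apply]
    refine Finset.sum_congr rfl fun j _ => ?_
    rw [smul_mul_smul_comm, map_smul, Finsupp.smul_apply, smul_eq_mul]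
  -- first conv term
  have hT1 : conv ii (α * β) k
      = ∑ i : ZMod p, ∑ j : ZMod p, α i * β j * (if i = j then ii (k - i) else 0) := by
    rw [conv_apply]
    have h2 : (∑ i : ZMod p, ii (k - i) * (α i * β i))
        = ∑ m : ZMod p, ii m * (α * β) (k - m) :=
      Fintype.sum_equiv (Equiv.subLeft k) _ _ (fun i => by
        simp only [Equiv.subLeft_apply, sub_sub_cancel, Pi.mul_apply])
    rw [← h2]
    refine Finset.sum_congr rfl fun i _ => ?_
    rw [Finset.sum_eq_single i (fun j _ hj => by
          rw [if_neg (fun h => hj h.symm), mul_zero])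
        (fun h => absurd (Finset.mem_univ i) h), if_pos rfl]
    ring
  -- second conv term
  have hT2 : conv uRinv (conv uR α * conv uR β - conv wR (α * β)) k
      = ∑ i : ZMod p, ∑ j : ZMod p, α i * β j *
          (∑ m : ZMod p, uRinv m *
            (uR (k - m - i) * uR (k - m - j) - (if i = j then wR (k - m - i) else 0))) := by
    have hD : ∀ n : ZMod p, (conv uR α * conv uR β - conv wR (α * β)) n
        = ∑ i : ZMod p, ∑ j : ZMod p,
            (α i * β j * (uR (n - i) * uR (n - j)) -
              α i * β j * (if i = j then wR (n - i) else 0)) := by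
      intro n
      have hA : conv uR α n = ∑ i : ZMod p, α i * uR (n - i) := by rw [conv_comm']; rfl
      have hBc : conv uR β n = ∑ j : ZMod p, β j * uR (n - j) := by rw [conv_comm']; rfl
      have hW : conv wR (α * β) n
          = ∑ i : ZMod p, ∑ j : ZMod p, α i * β j * (if i = j then wR (n - i) else 0) := by
        rw [conv_comm', conv_apply]
        refine Finset.sum_congr rfl fun i _ => ?_
        rw [Finset.sum_eq_single i (fun j _ hj => by
              rw [if_neg (fun h => hj h.symm), mul_zero])
            (fun h => absurd (Finset.mem_univ i) h), if_pos rfl, Pi.mul_apply]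
      rw [Pi.sub_apply, Pi.mul_apply, hA, hBc, hW, Finset.sum_mul_sum,
        ← Finset.sum_sub_distrib]
      refine Finset.sum_congr rfl fun i _ => ?_
      rw [← Finset.sum_sub_distrib]
      refine Finset.sum_congr rfl fun j _ => ?_
      ring
    calc conv uRinv (conv uR α * conv uR β - conv wR (α * β)) k
        = ∑ m : ZMod p, ∑ i : ZMod p, ∑ j : ZMod p, uRinv m *
            (α i * β j * (uR (k - m - i) * uR (k - m - j)) -
              α i * β j * (if i = j then wR (k - m - i) else 0)) := by
          rw [conv_apply]
          refine Finset.sum_congr rfl fun m _ => ?_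
          rw [hD (k - m), Finset.mul_sum]
          refine Finset.sum_congr rfl fun i _ => ?_
          rw [Finset.mul_sum]
      _ = ∑ i : ZMod p, ∑ m : ZMod p, ∑ j : ZMod p, uRinv m *
            (α i * β j * (uR (k - m - i) * uR (k - m - j)) -
              α i * β j * (if i = j then wR (k - m - i) else 0)) := Finset.sum_comm
      _ = ∑ i : ZMod p, ∑ j : ZMod p, ∑ m : ZMod p, uRinv m *
            (α i * β j * (uR (k - m - i) * uR (k - m - j)) -
              α i * β j * (if i = j then wR (k - m - i) else 0)) :=
          Finset.sum_congr rfl fun i _ => Finset.sum_comm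
      _ = _ := by
          refine Finset.sum_congr rfl fun i _ => Finset.sum_congr rfl fun j _ => ?_
          rw [Finset.mul_sum]
          refine Finset.sum_congr rfl fun m _ => ?_
          ring
  rw [hLHS, hT1, hT2, ← Finset.sum_add_distrib]
  refine Finset.sum_congr rfl fun i _ => ?_
  rw [← Finset.sum_add_distrib]
  refine Finset.sum_congr rfl fun j _ => ?_
  rw [key i j]
  simp only [hKER]
  ring
end

section
/- Let K be a field of characteristic p > 0 containing a primitive mn-th root of unity ζ_{mn} with m, n ≥ 2 and mn prime to p; set ζ = (ζ_{mn})^m. Let a ∈ K* have class of order n in K*/(K*)^n, let L = K[X]/(X^n − a), let θ be the class of X, and for 0 ≤ k ≤ n − 1 set θ_k = 1/(ζ^{−k}θ − 1). Then (θ_0, θ_1, …, θ_{n−1}) is a K-basis of L, and the generator σ of Gal(L/K) determined by σ(θ) = ζθ satisfies σ(θ_k) = θ_{k−1} (indices mod n); in particular this is a normal basis of L over K. -/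
open Polynomial

theorem aux_irred' {K : Type*} [Field K] {n : ℕ} (hn : 2 ≤ n) {a : K}
    (ha : ∀ r : ℕ, 0 < r → r < n → ¬ ∃ x : K, x ^ n = a ^ r) :
    Irreducible (X ^ n - C a : K[X]) := by
  have hn0 : 0 < n := by omega
  have hu : ¬ IsUnit (X ^ n - C a : K[X]) := by
    rw [Polynomial.isUnit_iff_degree_eq_zero, degree_X_pow_sub_C hn0, Nat.cast_eq_zero]
    omega
  obtain ⟨g, hg, hg'⟩ := WfDvdMonoid.exists_irreducible_factor hu (X_pow_sub_C_ne_zero hn0 a)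
  suffices h : g.natDegree = n from (associated_of_dvd_of_natDegree_le hg'
    (X_pow_sub_C_ne_zero hn0 a) (h.trans natDegree_X_pow_sub_C.symm).ge).irreducible hg
  by_contra h
  have : Fact (Irreducible g) := ⟨hg⟩
  have key : (Algebra.norm K (AdjoinRoot.root g)) ^ n = a ^ g.natDegree := by
    have := eval₂_eq_zero_of_dvd_of_eval₂_eq_zero _ _ hg' (AdjoinRoot.eval₂_root g)
    rw [eval₂_sub, eval₂_pow, eval₂_C, eval₂_X, sub_eq_zero] at this
    rw [← map_pow, this, ← AdjoinRoot.algebraMap_eq, Algebra.norm_algebraMap,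
      ← IntermediateField.finrank_top', ← IntermediateField.adjoin_root_eq_top g,
      IntermediateField.adjoin.finrank,
      AdjoinRoot.minpoly_root hg.ne_zero, natDegree_mul_C]
    · simpa using hg.ne_zero
    · exact AdjoinRoot.isIntegral_root hg.ne_zero
  have hd0 : 0 < g.natDegree :=
    natDegree_pos_iff_degree_pos.mpr (degree_pos_of_irreducible hg)
  have hdn : g.natDegree ≤ n :=
    (natDegree_le_of_dvd hg' (X_pow_sub_C_ne_zero hn0 a)).trans_eq natDegree_X_pow_sub_C
  exact ha g.natDegree hd0 (lt_of_le_of_ne hdn h) ⟨_, key⟩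

/-- In the Kummer extension `L = K[X]/(X^n - a)` with `θ` the class of `X` and
`ζ = ζ_{mn}^m`, the family `θ_k = 1/(ζ^{-k} θ - 1)` is a `K`-basis of `L`, and the
generator `σ` of `Gal(L/K)` with `σ(θ) = ζθ` satisfies `σ(θ_k) = θ_{k-1}` (indices
mod `n`): it is a normal basis. -/
theorem stmt_6 (K : Type*) [Field K] (p : ℕ) (hp : 0 < p) [CharP K p]
    (m n : ℕ) [NeZero n] (hm : 2 ≤ m) (hn : 2 ≤ n) (hcop : Nat.Coprime (m * n) p)
    (ζ : K) (hζ : IsPrimitiveRoot ζ (m * n))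
    (a : K) (ha0 : a ≠ 0)
    (ha : ∀ r : ℕ, 0 < r → r < n → ¬ ∃ x : K, x ^ n = a ^ r) :
    ∃ hirr : Irreducible (X ^ n - C a : K[X]),
      letI : Fact (Irreducible (X ^ n - C a : K[X])) := ⟨hirr⟩
      ∀ Θ : ZMod n → AdjoinRoot (X ^ n - C a : K[X]),
        (∀ k : ZMod n, Θ k =
          (algebraMap K (AdjoinRoot (X ^ n - C a : K[X])) (((ζ ^ m)⁻¹) ^ k.val) *
              AdjoinRoot.root (X ^ n - C a : K[X]) - 1)⁻¹) →
        (∃ B : Module.Basis (ZMod n) K (AdjoinRoot (X ^ n - C a : K[X])),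
          ∀ k : ZMod n, B k = Θ k) ∧
        ∀ σ : AdjoinRoot (X ^ n - C a : K[X]) ≃ₐ[K] AdjoinRoot (X ^ n - C a : K[X]),
          σ (AdjoinRoot.root (X ^ n - C a : K[X])) =
              algebraMap K (AdjoinRoot (X ^ n - C a : K[X])) (ζ ^ m) *
                AdjoinRoot.root (X ^ n - C a : K[X]) →
          ∀ k : ZMod n, σ (Θ k) = Θ (k - 1) := by
  have hirr : Irreducible (X ^ n - C a : K[X]) := aux_irred' hn ha
  refine ⟨hirr, ?_⟩
  haveI : Fact (Irreducible (X ^ n - C a : K[X])) := ⟨hirr⟩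
  set L := AdjoinRoot (X ^ n - C a : K[X]) with hL
  set θ : L := AdjoinRoot.root (X ^ n - C a : K[X]) with hθ
  set ω : K := ζ ^ m with hωdef
  intro Θ hΘ
  -- basic facts
  have hn0 : 0 < n := by omega
  have hmn0 : 0 < m * n := by positivity
  have hωprim : IsPrimitiveRoot ω n := hζ.pow hmn0 rfl
  have hωn : ω ^ n = 1 := hωprim.pow_eq_one
  have hω0 : ω ≠ 0 := fun h => by
    rw [h, zero_pow (by omega)] at hωn
    exact zero_ne_one hωn
  have hnK : (n : K) ≠ 0 := by
    rw [Ne, CharP.cast_eq_zero_iff K p]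
    intro hpd
    have hp1 : p = 1 := Nat.Coprime.eq_one_of_dvd hcop.symm (hpd.mul_left m)
    have h2 := CharP.cast_eq_zero K p
    rw [hp1, Nat.cast_one] at h2
    exact one_ne_zero h2
  have ha1 : a ≠ 1 := by
    intro h
    exact ha 1 one_pos (by omega) ⟨1, by simp [h]⟩
  have ha1K : a - 1 ≠ 0 := sub_ne_zero.mpr ha1
  have hθn : θ ^ n = algebraMap K L a := by
    rw [AdjoinRoot.algebraMap_eq]; exact root_X_pow_sub_C_pow n a
  have ha1' : algebraMap K L (a - 1) ≠ 0 := fun h =>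
    ha1K ((algebraMap K L).injective (h.trans (map_zero _).symm))
  -- geometric sum identity
  have hx : ∀ k : ZMod n, (algebraMap K L ((ω⁻¹) ^ k.val) * θ) ^ n = algebraMap K L a := by
    intro k
    rw [mul_pow, hθn, ← map_pow, ← map_mul]
    congr 1
    rw [← pow_mul, mul_comm k.val n, pow_mul, inv_pow, hωn, inv_one, one_pow, one_mul]
  have key : ∀ k : ZMod n, (algebraMap K L ((ω⁻¹) ^ k.val) * θ - 1) *
      (∑ i ∈ Finset.range n, (algebraMap K L ((ω⁻¹) ^ k.val) * θ) ^ i)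
        = algebraMap K L (a - 1) := by
    intro k
    rw [mul_comm, geom_sum_mul, hx, map_sub, map_one]
  have hΘ' : ∀ k : ZMod n, Θ k = algebraMap K L ((a - 1)⁻¹) *
      ∑ i ∈ Finset.range n, (algebraMap K L ((ω⁻¹) ^ k.val) * θ) ^ i := by
    intro k
    rw [hΘ k]
    refine inv_eq_of_mul_eq_one_right ?_
    rw [map_inv₀, mul_left_comm, key k, inv_mul_cancel₀ ha1']
  constructor
  · -- basis
    have hsum : ∀ f : ℕ → K, ∑ k : ZMod n, f (ZMod.val k) = ∑ t ∈ Finset.range n, f t := by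
      intro f
      refine Finset.sum_nbij' (fun k => ZMod.val k) (fun t => (t : ZMod n)) ?_ ?_ ?_ ?_ ?_
      · intro k _; exact Finset.mem_range.mpr (ZMod.val_lt k)
      · intro t _; exact Finset.mem_univ _
      · intro k _; simp [ZMod.natCast_val, ZMod.cast_id]
      · intro t ht; exact ZMod.val_cast_of_lt (Finset.mem_range.mp ht)
      · intro k _; rfl
    have hgeom : ∀ i < n, ∀ j < n,
        (∑ t ∈ Finset.range n, (ω ^ j * ω⁻¹ ^ i) ^ t) = if i = j then (n : K) else 0 := by
      intro i hi j hj
      rcases eq_or_ne i j with rfl | hij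
      · rw [if_pos rfl, ← mul_pow, mul_inv_cancel₀ hω0, one_pow]
        simp
      · rw [if_neg hij]
        have hc1 : ω ^ j * ω⁻¹ ^ i ≠ 1 := by
          intro h
          rw [inv_pow] at h
          have hji : ω ^ j = ω ^ i := (mul_inv_eq_one₀ (pow_ne_zero i hω0)).mp h
          exact hij (hωprim.pow_inj hi hj hji.symm)
        have hcn : (ω ^ j * ω⁻¹ ^ i) ^ n = 1 := by
          rw [mul_pow, ← pow_mul, mul_comm j n, pow_mul, hωn, one_pow, one_mul,
            ← pow_mul, mul_comm i n, pow_mul, inv_pow, hωn, inv_one, one_pow]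
        have hgs := geom_sum_mul (ω ^ j * ω⁻¹ ^ i) n
        rw [hcn, sub_self] at hgs
        rcases mul_eq_zero.mp hgs with h | h
        · exact h
        · exact absurd (sub_eq_zero.mp h) hc1
    have hDFT : ∀ j : ℕ, j < n →
        ∑ k : ZMod n, ((a - 1) * (n : K)⁻¹ * ω ^ (j * ZMod.val k)) • Θ k = θ ^ j := by
      intro j hj
      have step1 : ∀ k : ZMod n, ((a - 1) * (n : K)⁻¹ * ω ^ (j * ZMod.val k)) • Θ k =
          ∑ i ∈ Finset.range n, ((n : K)⁻¹ * (ω ^ j * ω⁻¹ ^ i) ^ ZMod.val k) • θ ^ i := by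
        intro k
        rw [hΘ' k, Finset.mul_sum, Finset.smul_sum]
        refine Finset.sum_congr rfl fun i _ => ?_
        rw [mul_pow, ← map_pow, ← mul_assoc, ← map_mul, ← Algebra.smul_def, smul_smul]
        congr 1
        rw [mul_pow (ω ^ j), ← pow_mul, ← pow_mul, ← pow_mul, mul_comm (ZMod.val k) i]
        field_simp
        ring
      rw [Finset.sum_congr rfl (fun k _ => step1 k), Finset.sum_comm]
      have step2 : ∀ i ∈ Finset.range n,
          ∑ k : ZMod n, ((n : K)⁻¹ * (ω ^ j * ω⁻¹ ^ i) ^ ZMod.val k) • θ ^ i =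
          ((n : K)⁻¹ * if i = j then (n : K) else 0) • θ ^ i := by
        intro i hi
        rw [← Finset.sum_smul, ← Finset.mul_sum]
        congr 2
        rw [hsum (fun t => (ω ^ j * ω⁻¹ ^ i) ^ t), hgeom i (Finset.mem_range.mp hi) j hj]
      rw [Finset.sum_congr rfl step2, Finset.sum_eq_single j]
      · rw [if_pos rfl, inv_mul_cancel₀ hnK, one_smul]
      · intro i _ hij
        rw [if_neg hij, mul_zero, zero_smul]
      · intro h
        exact absurd (Finset.mem_range.mpr hj) h
    have hf0 : (X ^ n - C a : K[X]) ≠ 0 := X_pow_sub_C_ne_zero hn0 a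
    have hspan : ⊤ ≤ Submodule.span K (Set.range Θ) := by
      rw [← (AdjoinRoot.powerBasis hf0).basis.span_eq, Submodule.span_le]
      rintro x ⟨i, rfl⟩
      have hd : (AdjoinRoot.powerBasis hf0).dim = n := by
        rw [AdjoinRoot.powerBasis_dim, natDegree_X_pow_sub_C]
      have hilt : (i : ℕ) < n := by have := i.isLt; omega
      rw [PowerBasis.basis_eq_pow, AdjoinRoot.powerBasis_gen, ← hθ, ← hDFT (i : ℕ) hilt]
      exact Submodule.sum_mem _ fun k _ => Submodule.smul_mem _ _
        (Submodule.subset_span ⟨k, rfl⟩)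
    have hcard : Fintype.card (ZMod n) = Module.finrank K L := by
      rw [ZMod.card, (AdjoinRoot.powerBasis hf0).finrank, AdjoinRoot.powerBasis_dim,
        natDegree_X_pow_sub_C]
    exact ⟨basisOfTopLeSpanOfCardEqFinrank Θ hspan hcard, fun k => by
      rw [coe_basisOfTopLeSpanOfCardEqFinrank]⟩
  · -- Galois action
    intro σ hσ k
    have hord : orderOf ω = n := hωprim.eq_orderOf.symm
    have hmod : (ZMod.val (k - 1) + 1) % n = ZMod.val k % n := by
      have hc : (((ZMod.val (k - 1) + 1 : ℕ)) : ZMod n) = ((ZMod.val k : ℕ) : ZMod n) := by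
        push_cast
        simp [ZMod.natCast_val, ZMod.cast_id, sub_add_cancel]
      exact (ZMod.natCast_eq_natCast_iff _ _ _).mp hc
    have hpow : ω ^ ZMod.val k = ω ^ (ZMod.val (k - 1) + 1) := by
      conv_lhs => rw [← pow_mod_orderOf]
      conv_rhs => rw [← pow_mod_orderOf]
      rw [hord, hmod]
    have hcoef : ω⁻¹ ^ ZMod.val k * ω = ω⁻¹ ^ ZMod.val (k - 1) := by
      rw [inv_pow, inv_pow, hpow, pow_succ, mul_inv, mul_assoc, inv_mul_cancel₀ hω0, mul_one]
    rw [hΘ k, hΘ (k - 1), map_inv₀]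
    congr 1
    rw [map_sub, map_one, map_mul, AlgEquiv.commutes, hσ, ← mul_assoc, ← map_mul, hcoef]
end

section
/- Let K be a field, let n ≥ 2 be an integer invertible in K, let ζ ∈ K be a primitive n-th root of unity, and let R ∈ K* be an element with R^n ≠ 1. Then the element Σ_{k ∈ Z/nZ} (Rζ^k − 1)^{−1} · e_k of the group algebra K[Z/nZ] is a unit; equivalently, the vector ((Rζ^k − 1)^{−1})_{k ∈ Z/nZ} is invertible for the convolution product on K^{Z/nZ}. -/
open Finset

namespace Stmt8Aux

set_option linter.unusedSectionVars false

variable {K : Type*} [Field K] {n : ℕ} [NeZero n] {ζ R : K}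

lemma zpm (hζn : ζ ^ n = 1) (x : ℕ) : ζ ^ (x % n) = ζ ^ x := by
  conv_rhs => rw [← Nat.div_add_mod x n]
  rw [pow_add, pow_mul, hζn, one_pow, one_mul]

lemma psi_add (hζn : ζ ^ n = 1) (a b : ZMod n) :
    ζ ^ (a + b).val = ζ ^ a.val * ζ ^ b.val := by
  rw [ZMod.val_add, zpm hζn, pow_add]

lemma psi_neg (hζn : ζ ^ n = 1) (k : ZMod n) :
    ζ ^ k.val * ζ ^ (-k).val = 1 := by
  rw [← psi_add hζn, add_neg_cancel, ZMod.val_zero, pow_zero]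

lemma sub_ne (hζn : ζ ^ n = 1) (hRn : R ^ n ≠ 1) (k : ℕ) : R - ζ ^ k ≠ 0 := by
  intro h
  apply hRn
  rw [sub_eq_zero] at h
  rw [h, ← pow_mul, mul_comm, pow_mul, hζn, one_pow]

lemma mul_ne (hζn : ζ ^ n = 1) (hRn : R ^ n ≠ 1) (k : ℕ) : R * ζ ^ k - 1 ≠ 0 := by
  intro h
  apply hRn
  rw [sub_eq_zero] at h
  have : (R * ζ ^ k) ^ n = 1 := by rw [h, one_pow]
  rwa [mul_pow, ← pow_mul, mul_comm k n, pow_mul, hζn, one_pow, mul_one] at this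

lemma geom0 (hζ : IsPrimitiveRoot ζ n) (j : ℕ) (h0 : 0 < j) (hj : j < n) :
    ∑ k ∈ range n, (ζ ^ j) ^ k = 0 := by
  have h1 : ζ ^ j - 1 ≠ 0 := sub_ne_zero.mpr (hζ.pow_ne_one_of_pos_of_lt h0.ne' hj)
  have := geom_sum_mul (ζ ^ j) n
  rw [← pow_mul, mul_comm j n, pow_mul, hζ.pow_eq_one, one_pow, sub_self] at this
  exact (mul_eq_zero.mp this).resolve_right h1

/-- Sum over ZMod n equals sum over range n. -/
lemma sum_zmod {M : Type*} [AddCommMonoid M] (G : ℕ → M) :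
    ∑ k : ZMod n, G k.val = ∑ i ∈ range n, G i := by
  apply Finset.sum_bij' (fun (k : ZMod n) _ => k.val) (fun (i : ℕ) _ => (i : ZMod n))
  · intro k _; exact mem_range.mpr (ZMod.val_lt k)
  · intro i _; exact mem_univ _
  · intro k _; exact ZMod.natCast_rightInverse k
  · intro i hi; exact ZMod.val_cast_of_lt (mem_range.mp hi)
  · intro k _; rfl

lemma g0_mul (hζ : IsPrimitiveRoot ζ n) (hRn : R ^ n ≠ 1) :
    (∑ k : ZMod n, (R - ζ ^ k.val)⁻¹) * (R ^ n - 1) = (n : K) * R ^ (n - 1) := by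
  have hζn := hζ.pow_eq_one
  have hpos : 0 < n := Nat.pos_of_ne_zero (NeZero.ne n)
  rw [sum_zmod (fun i => (R - ζ ^ i)⁻¹), Finset.sum_mul]
  have hterm : ∀ k ∈ range n, (R - ζ ^ k)⁻¹ * (R ^ n - 1) =
      ∑ j ∈ range n, R ^ j * (ζ ^ (n - 1 - j)) ^ k := by
    intro k _
    have h1 : R ^ n - 1 = (∑ j ∈ range n, R ^ j * (ζ ^ k) ^ (n - 1 - j)) * (R - ζ ^ k) := by
      rw [geom_sum₂_mul]
      congr 1
      rw [← pow_mul, mul_comm k n, pow_mul, hζn, one_pow]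
    rw [h1, mul_comm _ (R - ζ ^ k), inv_mul_cancel_left₀ (sub_ne hζn hRn k)]
    exact Finset.sum_congr rfl fun j _ => by rw [pow_right_comm]
  rw [Finset.sum_congr rfl hterm, Finset.sum_comm]
  rw [Finset.sum_eq_single_of_mem (n - 1) (mem_range.mpr (Nat.sub_lt hpos one_pos))]
  · simp [Nat.sub_self, Finset.sum_const, mul_comm]
  · intro j hj hne
    have hj' : j < n := mem_range.mp hj
    have h0 : 0 < n - 1 - j := by omega
    have hlt : n - 1 - j < n := by omega
    rw [← Finset.mul_sum, geom0 hζ _ h0 hlt, mul_zero]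


lemma a_term (hζn : ζ ^ n = 1) (hRn : R ^ n ≠ 1) (k : ZMod n) :
    (R * ζ ^ k.val - 1)⁻¹ = ζ ^ (-k).val * (R - ζ ^ (-k).val)⁻¹ := by
  have hck : ζ ^ k.val * ζ ^ (-k).val = 1 := psi_neg hζn k
  have h1 : R * ζ ^ k.val - 1 = ζ ^ k.val * (R - ζ ^ (-k).val) := by
    rw [mul_sub, hck]; ring
  have hc0 : ζ ^ k.val ≠ 0 := left_ne_zero_of_mul_eq_one hck
  rw [h1, mul_inv, inv_eq_of_mul_eq_one_left (by rw [mul_comm]; exact hck)]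

lemma aSum (hζn : ζ ^ n = 1) (hRn : R ^ n ≠ 1) :
    ∑ k : ZMod n, (R * ζ ^ k.val - 1)⁻¹ =
      R * (∑ k : ZMod n, (R - ζ ^ k.val)⁻¹) - n := by
  rw [Finset.sum_congr rfl fun k _ => a_term hζn hRn k]
  rw [show (∑ k : ZMod n, ζ ^ (-k).val * (R - ζ ^ (-k).val)⁻¹)
      = ∑ j : ZMod n, ζ ^ j.val * (R - ζ ^ j.val)⁻¹ from
    Fintype.sum_equiv (Equiv.neg (ZMod n)) _ _ (fun k => rfl)]
  have hterm : ∀ j : ZMod n, ζ ^ j.val * (R - ζ ^ j.val)⁻¹ =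
      R * (R - ζ ^ j.val)⁻¹ - 1 := by
    intro j
    have h := sub_ne hζn hRn j.val
    field_simp
    ring
  rw [Finset.sum_congr rfl fun j _ => hterm j, Finset.sum_sub_distrib,
    ← Finset.mul_sum]
  simp [ZMod.card]

lemma vanish (hζ : IsPrimitiveRoot ζ n) (hRn : R ^ n ≠ 1) (m : ZMod n) (hm : m ≠ 0) :
    ∑ k : ZMod n, (R * ζ ^ k.val - 1)⁻¹ * (R - ζ ^ (m - k).val)⁻¹ = 0 := by
  have hζn := hζ.pow_eq_one
  have hZ : (1 : K) - ζ ^ m.val ≠ 0 := by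
    rw [sub_ne_zero]
    intro h
    exact hζ.pow_ne_one_of_pos_of_lt
      (Nat.pos_of_ne_zero (fun h0 => hm ((ZMod.val_eq_zero m).mp h0))).ne' (ZMod.val_lt m) h.symm
  have hterm : ∀ k : ZMod n, (R * ζ ^ k.val - 1)⁻¹ * (R - ζ ^ (m - k).val)⁻¹ =
      (1 - ζ ^ m.val)⁻¹ * ((R - ζ ^ (-k).val)⁻¹ - (R - ζ ^ (m - k).val)⁻¹) := by
    intro k
    rw [a_term hζn hRn k]
    have hmk : ζ ^ (m - k).val = ζ ^ m.val * ζ ^ (-k).val := by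
      rw [sub_eq_add_neg, psi_add hζn]
    have hA : R - ζ ^ (-k).val ≠ 0 := sub_ne hζn hRn _
    have hZA : R - ζ ^ (m - k).val ≠ 0 := sub_ne hζn hRn _
    rw [hmk] at hZA ⊢
    have hZA' : R - ζ ^ (-k).val * ζ ^ m.val ≠ 0 := by rwa [mul_comm (ζ ^ (-k).val)]
    field_simp
    ring
  rw [Finset.sum_congr rfl fun k _ => hterm k, ← Finset.mul_sum,
    Finset.sum_sub_distrib]
  have e1 : ∑ k : ZMod n, (R - ζ ^ (-k).val)⁻¹ = ∑ j : ZMod n, (R - ζ ^ j.val)⁻¹ :=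
    Fintype.sum_equiv (Equiv.neg (ZMod n)) _ _ (fun k => rfl)
  have e2 : ∑ k : ZMod n, (R - ζ ^ (m - k).val)⁻¹ = ∑ j : ZMod n, (R - ζ ^ j.val)⁻¹ :=
    Fintype.sum_equiv (Equiv.subLeft m) _ _ (fun k => rfl)
  rw [e1, e2, sub_self, mul_zero]

end Stmt8Aux


/-- If `K` is a field, `n ≥ 2` is invertible in `K`, `ζ ∈ K` is a primitive `n`-th root
of unity, and `R ∈ K*` satisfies `R^n ≠ 1`, then `Σ_{k ∈ Z/nZ} (Rζ^k - 1)⁻¹ · e_k` is a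
unit of the group algebra `K[Z/nZ]`, i.e. the vector `((Rζ^k - 1)⁻¹)_k` is invertible
for the convolution product. -/
theorem stmt_8 (K : Type*) [Field K] (n : ℕ) [NeZero n] (hn : 2 ≤ n)
    (hninv : (n : K) ≠ 0) (ζ : K) (hζ : IsPrimitiveRoot ζ n)
    (R : K) (hR0 : R ≠ 0) (hRn : R ^ n ≠ 1) :
    IsUnit ((∑ k : ZMod n,
        AddMonoidAlgebra.single k ((R * ζ ^ k.val - 1)⁻¹)) :
      AddMonoidAlgebra K (ZMod n)) := by
  classical
  have hζn := hζ.pow_eq_one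
  set a : ZMod n → K := fun k => (R * ζ ^ k.val - 1)⁻¹ with ha
  set b : ZMod n → K := fun j => (R - ζ ^ j.val)⁻¹ with hb
  set S : K := ∑ k : ZMod n, a k * b (0 - k) with hSdef
  have conv : (∑ k : ZMod n, AddMonoidAlgebra.single k (a k)) *
      (∑ j : ZMod n, AddMonoidAlgebra.single j (b j)) =
      AddMonoidAlgebra.single (0 : ZMod n) S := by
    rw [Finset.sum_mul_sum]
    have step1 : ∀ k : ZMod n,
        (∑ j : ZMod n, AddMonoidAlgebra.single k (a k) * AddMonoidAlgebra.single j (b j)) =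
        ∑ m : ZMod n, AddMonoidAlgebra.single m (a k * b (m - k)) := by
      intro k
      refine Fintype.sum_equiv (Equiv.addLeft k) _ _ fun j => ?_
      rw [AddMonoidAlgebra.single_mul_single]
      simp
    rw [Finset.sum_congr rfl fun k _ => step1 k, Finset.sum_comm]
    have step2 : ∀ m : ZMod n,
        (∑ k : ZMod n, AddMonoidAlgebra.single m (a k * b (m - k))) =
        AddMonoidAlgebra.single m (∑ k : ZMod n, a k * b (m - k)) :=
      fun m => (map_sum (AddMonoidAlgebra.singleAddHom m) _ _).symm
    rw [Finset.sum_congr rfl fun m _ => step2 m]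
    rw [Finset.sum_eq_single_of_mem 0 (Finset.mem_univ _)]
    intro m _ hm
    rw [show (∑ k : ZMod n, a k * b (m - k)) = 0 from Stmt8Aux.vanish hζ hRn m hm]
    exact AddMonoidAlgebra.single_zero m
  have hR1 : R ^ n - 1 ≠ 0 := sub_ne_zero.mpr hRn
  have hpow : R ^ n = R * R ^ (n - 1) := by
    conv_lhs => rw [show n = 1 + (n - 1) by omega]
    rw [pow_add, pow_one]
  have hbkey : (∑ k : ZMod n, b k) * (R ^ n - 1) = (n : K) * R ^ (n - 1) :=
    Stmt8Aux.g0_mul hζ hRn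
  have hbne : (∑ k : ZMod n, b k) ≠ 0 := by
    intro h0
    rw [h0, zero_mul] at hbkey
    exact mul_ne_zero hninv (pow_ne_zero _ hR0) hbkey.symm
  have hakey : (∑ k : ZMod n, a k) * (R ^ n - 1) = (n : K) := by
    rw [Stmt8Aux.aSum hζn hRn, sub_mul, mul_assoc, hbkey, hpow]
    ring
  have hane : (∑ k : ZMod n, a k) ≠ 0 := by
    intro h0
    rw [h0, zero_mul] at hakey
    exact hninv hakey.symm
  set φ : AddMonoidAlgebra K (ZMod n) →+* K :=
    AddMonoidAlgebra.liftNCRingHom (RingHom.id K) 1 (fun _ _ => Commute.all _ _) with hφ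
  have φsingle : ∀ (g : ZMod n) (x : K), φ (AddMonoidAlgebra.single g x) = x := by
    intro g x
    simp [hφ, AddMonoidAlgebra.liftNCRingHom]
  have hS : S = (∑ k : ZMod n, a k) * (∑ k : ZMod n, b k) := by
    have h1 := congrArg φ conv
    rw [map_mul, map_sum, map_sum] at h1
    simp only [φsingle] at h1
    exact h1.symm ▸ rfl
  have hSne : S ≠ 0 := by rw [hS]; exact mul_ne_zero hane hbne
  refine IsUnit.of_mul_eq_one
    ((∑ j : ZMod n, AddMonoidAlgebra.single j (b j)) * AddMonoidAlgebra.single 0 S⁻¹) ?_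
  rw [← mul_assoc, conv, AddMonoidAlgebra.single_mul_single, add_zero,
    mul_inv_cancel₀ hSne]
  exact AddMonoidAlgebra.one_def.symm
end

section
/- Let F_q be a finite field of odd characteristic, α ∈ F_q a nonsquare, and n a divisor of q + 1 with 1 < n < q + 1. Let a be a generator of the cyclic group T_α(F_q) of order q + 1, and let b be a point of T_α with coordinates in an algebraic closure of F_q such that [n]b = a (n-fold sum of b with itself in the group law). Then the subfield F_q(x(b), y(b)) generated by the coordinates of b is the degree n extension F_{q^n} of F_q; in particular [F_q(x(b), y(b)) : F_q] = n. -/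
def tmul {F : Type*} [Field F] (α : F) (P Q : F × F) : F × F :=
  (P.1 * Q.1 + α * P.2 * Q.2, P.1 * Q.2 + Q.1 * P.2)

def tpow {F : Type*} [Field F] (α : F) (k : ℕ) (P : F × F) : F × F :=
  (tmul α P)^[k] (1, 0)

open Polynomial

lemma tpow_succ {F : Type*} [Field F] (α : F) (k : ℕ) (P : F × F) :
    tpow α (k + 1) P = tmul α P (tpow α k P) := Function.iterate_succ_apply' _ _ _

lemma phi_tpow {F : Type*} [Field F] {α s : F} (hs : s ^ 2 = α) (P : F × F) (k : ℕ) :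
    (tpow α k P).1 + s * (tpow α k P).2 = (P.1 + s * P.2) ^ k := by
  induction k with
  | zero => simp [tpow]
  | succ k ih =>
    rw [tpow_succ, pow_succ, ← ih]
    subst hs
    set Q := tpow (s ^ 2) k P
    simp only [tmul]
    ring

lemma map_tpow {F F' : Type*} [Field F] [Field F'] (f : F →+* F') (α : F) (k : ℕ) (P : F × F) :
    tpow (f α) k (f P.1, f P.2) = (f (tpow α k P).1, f (tpow α k P).2) := by
  induction k with
  | zero => simp [tpow]
  | succ k ih =>
    rw [tpow_succ, tpow_succ, ih]
    simp only [tmul, Prod.mk.injEq]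
    constructor <;> push_cast <;> simp [map_add, map_mul] <;> ring

lemma frob_fixed {K Ω : Type*} [Field K] [Fintype K] [Field Ω] [Algebra K Ω]
    {t : Ω} (ht : t ^ Fintype.card K = t) : ∃ c : K, algebraMap K Ω c = t := by
  classical
  set q := Fintype.card K with hq
  have hq1 : 1 < q := Fintype.one_lt_card
  set P : Polynomial Ω := X ^ q - X with hP
  have hPne : P ≠ 0 := FiniteField.X_pow_card_sub_X_ne_zero Ω hq1
  have hPdeg : P.natDegree = q := FiniteField.X_pow_card_sub_X_natDegree_eq Ω hq1
  set S : Finset Ω := Finset.univ.image (algebraMap K Ω) with hS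
  have hcardS : S.card = q := by
    rw [hS, Finset.card_image_of_injective _ (algebraMap K Ω).injective, Finset.card_univ]
  have hsub : S ⊆ P.roots.toFinset := by
    intro x hx
    rw [Multiset.mem_toFinset, mem_roots hPne]
    simp only [hS, Finset.mem_image] at hx
    obtain ⟨c, -, rfl⟩ := hx
    have hc : c ^ q = c := FiniteField.pow_card c
    simp [hP, IsRoot, ← map_pow, hc]
  have hcard2 : P.roots.toFinset.card ≤ q :=
    le_trans (Multiset.toFinset_card_le _) (le_trans P.card_roots' (le_of_eq hPdeg))
  have heq : S = P.roots.toFinset :=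
    Finset.eq_of_subset_of_card_le hsub (by rw [hcardS]; exact hcard2)
  have htmem : t ∈ P.roots.toFinset := by
    rw [Multiset.mem_toFinset, mem_roots hPne]
    simp [hP, IsRoot, ht]
  rw [← heq] at htmem
  obtain ⟨c, -, hc⟩ := Finset.mem_image.mp htmem
  exact ⟨c, hc⟩

lemma keyA (Q : ℤ) : ∀ m : ℕ, Q ^ 2 ∣ (1 - Q) ^ m - 1 + m * Q
  | 0 => by simp
  | (m + 1) => by
    have ih := keyA Q m
    have hid : (1 - Q) ^ (m + 1) - 1 + (m + 1 : ℕ) * Q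
        = (1 - Q) * ((1 - Q) ^ m - 1 + m * Q) + m * Q ^ 2 := by push_cast; ring
    rw [hid]
    exact dvd_add (ih.mul_left _) ⟨m, by ring⟩

lemma keyNT {n q : ℕ} (hdvd : n ∣ q + 1) (m : ℕ) :
    ((n * (q + 1) : ℕ) : ℤ) ∣ (1 - ((q : ℤ) + 1)) ^ m - 1 ↔ n ∣ m := by
  set Q : ℤ := (q : ℤ) + 1 with hQ
  have hQpos : 0 < Q := by positivity
  have hnQ : (n : ℤ) ∣ Q := by have := Int.natCast_dvd_natCast.mpr hdvd; push_cast at this; exact this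
  have hNval : ((n * (q + 1) : ℕ) : ℤ) = (n : ℤ) * Q := by push_cast; ring
  have hNQ2 : ((n * (q + 1) : ℕ) : ℤ) ∣ Q ^ 2 := by
    rw [hNval, sq]; exact mul_dvd_mul hnQ dvd_rfl
  obtain ⟨c, hc⟩ := keyA Q m
  have hrw : (1 - Q) ^ m - 1 = -((m : ℤ) * Q) + Q ^ 2 * c := by linarith
  constructor
  · intro h
    have h2 : ((n * (q + 1) : ℕ) : ℤ) ∣ (m : ℤ) * Q := by
      have := dvd_sub (hNQ2.mul_right c) h
      rw [hrw] at this
      simpa using this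
    rw [hNval] at h2
    rw [← Int.natCast_dvd_natCast]
    exact_mod_cast (mul_dvd_mul_iff_right hQpos.ne').mp h2
  · intro h
    rw [hrw]
    refine dvd_add (dvd_neg.mpr ?_) (hNQ2.mul_right c)
    rw [hNval]
    exact mul_dvd_mul (Int.natCast_dvd_natCast.mpr h) dvd_rfl
/-- If `a` generates the cyclic group `T_α(F_q)` of order `q + 1`, `n` is a nontrivial
divisor of `q + 1`, and `b` is a point of the Lucas torus over an algebraic closure of
`F_q` with `[n]b = a`, then the field generated over `F_q` by the coordinates of `b` is
the degree-`n` extension `F_{q^n}`. -/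
theorem stmt_11 (K : Type*) [Field K] [Fintype K] (hchar : ringChar K ≠ 2)
    (α : K) (hα : ¬ IsSquare α)
    (n : ℕ) (hn1 : 1 < n) (hn2 : n < Fintype.card K + 1)
    (hdvd : n ∣ Fintype.card K + 1)
    (a : K × K) (ha : a.1 ^ 2 - α * a.2 ^ 2 = 1)
    (hgen : ∀ P : K × K, P.1 ^ 2 - α * P.2 ^ 2 = 1 → ∃ k : ℕ, P = tpow α k a)
    (Ω : Type*) [Field Ω] [Algebra K Ω] [IsAlgClosure K Ω]
    (b : Ω × Ω) (hb : b.1 ^ 2 - algebraMap K Ω α * b.2 ^ 2 = 1)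
    (hnb : tpow (algebraMap K Ω α) n b = (algebraMap K Ω a.1, algebraMap K Ω a.2)) :
    Module.finrank K (Algebra.adjoin K {b.1, b.2} : Subalgebra K Ω) = n := by
  classical
  set q := Fintype.card K with hq
  have hq1 : 1 < q := Fintype.one_lt_card
  have hqodd : q % 2 = 1 := FiniteField.odd_card_of_char_ne_two hchar
  set A := algebraMap K Ω with hA
  have hAinj : Function.Injective A := (algebraMap K Ω).injective
  have h2K : (2 : K) ≠ 0 := Ring.two_ne_zero hchar
  have h2 : (2 : Ω) ≠ 0 := by
    intro h
    apply h2K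
    apply hAinj
    rw [map_ofNat, map_zero, h]
  have hα0 : α ≠ 0 := fun h => hα (h ▸ ⟨0, by simp⟩)
  haveI : IsAlgClosed Ω := IsAlgClosure.isAlgClosed K
  haveI : Algebra.IsAlgebraic K Ω := IsAlgClosure.isAlgebraic
  obtain ⟨s, hs⟩ : ∃ s : Ω, s ^ 2 = A α :=
    IsAlgClosed.exists_pow_nat_eq (A α) (n := 2) (by norm_num)
  have hs0 : s ≠ 0 := by
    intro h
    apply hα0
    apply hAinj
    rw [map_zero, ← hs, h]
    ring
  -- Euler's criterion
  have hEuler : α ^ (q / 2) = -1 := by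
    rcases FiniteField.pow_dichotomy hchar hα0 with h | h
    · exact absurd ((FiniteField.isSquare_iff hchar hα0).mpr h) hα
    · exact h
  have hsq : s ^ q = -s := by
    have hq2 : q = 2 * (q / 2) + 1 := by omega
    calc s ^ q = (s ^ 2) ^ (q / 2) * s := by
          rw [← pow_mul, ← pow_succ, ← hq2]
      _ = A (α ^ (q / 2)) * s := by rw [hs, map_pow]
      _ = -s := by rw [hEuler, map_neg, map_one]; ring
  have hspow : ∀ m : ℕ, s ^ q ^ m = (-1 : Ω) ^ m * s := by
    intro m
    induction m with
    | zero => simp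
    | succ m ih =>
      have hodd : Odd q := ⟨q / 2, by omega⟩
      calc s ^ q ^ (m + 1) = (s ^ q ^ m) ^ q := by
            rw [← pow_mul, ← pow_succ]
        _ = ((-1 : Ω) ^ m) ^ q * s ^ q := by rw [ih, mul_pow]
        _ = ((-1 : Ω) ^ q) ^ m * -s := by rw [hsq, ← pow_mul, ← pow_mul, mul_comm m q]
        _ = (-1 : Ω) ^ (m + 1) * s := by rw [hodd.neg_one_pow, pow_succ]; ring
  -- characteristic and Frobenius additivity
  set p := ringChar K with hp
  haveI : CharP K p := ringChar.charP K
  have hpprime : p.Prime := CharP.char_is_prime K p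
  haveI : Fact p.Prime := ⟨hpprime⟩
  haveI : CharP Ω p := charP_of_injective_algebraMap hAinj p
  obtain ⟨f, -, hf⟩ := FiniteField.card K p
  have hqpow : ∀ m : ℕ, q ^ m = p ^ ((f : ℕ) * m) := by
    intro m; rw [hq, hf, ← pow_mul]
  have addpow : ∀ (x y : Ω) (m : ℕ), (x + y) ^ q ^ m = x ^ q ^ m + y ^ q ^ m := by
    intro x y m
    rw [hqpow m]
    exact add_pow_char_pow x y p ((f : ℕ) * m)
  have Apow : ∀ (c : K) (m : ℕ), (A c) ^ q ^ m = A c := by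
    intro c m
    rw [← map_pow, FiniteField.pow_card_pow]
  have hqnodd : ∀ m : ℕ, Odd (q ^ m) := fun m => Odd.pow (⟨q / 2, by omega⟩ : Odd q)
  -- the points as elements of Ω via x + s y
  set z := b.1 + s * b.2 with hz
  set zi := b.1 - s * b.2 with hzi
  have hzzi : z * zi = 1 := by
    have h1 : z * zi = b.1 ^ 2 - A α * b.2 ^ 2 := by rw [hz, hzi, ← hs]; ring
    rw [h1, hb]
  have hz0 : z ≠ 0 := left_ne_zero_of_mul_eq_one hzzi
  have hziz : zi = z⁻¹ := eq_inv_of_mul_eq_one_right hzzi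
  set w := A a.1 + s * A a.2 with hw
  set wi := A a.1 - s * A a.2 with hwi
  have haΩ : (A a.1) ^ 2 - A α * (A a.2) ^ 2 = 1 := by
    have h1 := congrArg A ha
    rw [map_sub, map_mul, map_pow, map_pow, map_one] at h1
    exact h1
  have hwwi : w * wi = 1 := by
    have h1 : w * wi = (A a.1) ^ 2 - A α * (A a.2) ^ 2 := by rw [hw, hwi, ← hs]; ring
    rw [h1, haΩ]
  have hw0 : w ≠ 0 := left_ne_zero_of_mul_eq_one hwwi
  have hznw : z ^ n = w := by
    have h1 := phi_tpow hs b n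
    rw [hnb] at h1
    exact h1.symm
  have hwq : w ^ q = wi := by
    have h1 : w ^ q = w ^ q ^ 1 := by rw [pow_one]
    rw [h1, hw, addpow, mul_pow, Apow a.1 1, Apow a.2 1, hspow 1, hwi]
    ring
  have hwq1 : w ^ (q + 1) = 1 := by
    rw [pow_succ, hwq, mul_comm]
    exact hwwi
  -- subtraction version of Frobenius additivity
  have subpow : ∀ (x y : Ω) (m : ℕ), (x - y) ^ q ^ m = x ^ q ^ m - y ^ q ^ m := by
    intro x y m
    rw [hqpow m]
    exact sub_pow_char_pow x y ((f : ℕ) * m)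
  have h2pow : ∀ m : ℕ, (2 : Ω) ^ q ^ m = 2 := by
    intro m
    rw [show ((2 : Ω)) = A 2 by rw [map_ofNat], Apow]
  -- every (q+1)-th root of unity is a power of w
  have hsurj : ∀ u : Ω, u ^ (q + 1) = 1 → ∃ k : ℕ, u = w ^ k := by
    intro u hu
    have hu0 : u ≠ 0 := by
      intro h
      rw [h, zero_pow (by omega : q + 1 ≠ 0)] at hu
      exact zero_ne_one hu
    have huq : u ^ q = u⁻¹ := by
      refine eq_inv_of_mul_eq_one_left ?_
      rw [← pow_succ]
      exact hu
    set x := (u + u⁻¹) / 2 with hx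
    set y := (u - u⁻¹) / (2 * s) with hy
    have hxq : x ^ Fintype.card K = x := by
      rw [← hq]
      calc x ^ q = (u + u⁻¹) ^ q ^ 1 / (2 : Ω) ^ q ^ 1 := by rw [pow_one, hx, div_pow]
        _ = (u⁻¹ + u) / 2 := by
            rw [addpow, h2pow, pow_one, huq, inv_pow, huq, inv_inv]
        _ = x := by rw [hx, add_comm]
    have hyq : y ^ Fintype.card K = y := by
      rw [← hq]
      calc y ^ q = (u - u⁻¹) ^ q ^ 1 / ((2 : Ω) ^ q ^ 1 * s ^ q ^ 1) := by
            rw [pow_one, hy, div_pow, mul_pow]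
        _ = (u⁻¹ - u) / (2 * -s) := by
            rw [subpow, h2pow, hspow 1, pow_one, huq, inv_pow, huq, inv_inv]
            ring_nf
        _ = y := by rw [hy]; field_simp; ring
    obtain ⟨x₀, hx₀⟩ := frob_fixed (K := K) hxq
    obtain ⟨y₀, hy₀⟩ := frob_fixed (K := K) hyq
    have hxy : x₀ ^ 2 - α * y₀ ^ 2 = 1 := by
      apply hAinj
      rw [map_sub, map_mul, map_pow, map_pow, map_one, hx₀, hy₀, ← hs, hx, hy]
      field_simp
      ring
    obtain ⟨k, hk⟩ := hgen (x₀, y₀) hxy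
    refine ⟨k, ?_⟩
    have hmap := map_tpow (algebraMap K Ω) α k a
    have hphi := phi_tpow hs ((A a.1, A a.2) : Ω × Ω) k
    rw [← hA] at hmap
    rw [hmap] at hphi
    have h1 : (tpow α k a).1 = x₀ := by rw [← hk]
    have h2' : (tpow α k a).2 = y₀ := by rw [← hk]
    rw [h1, h2', hx₀, hy₀] at hphi
    rw [← hphi, hx, hy]
    field_simp
    ring
  -- the order of w is exactly q + 1
  have hwfin : orderOf w ∣ q + 1 := orderOf_dvd_of_pow_eq_one hwq1
  have hwpos : 0 < orderOf w :=
    orderOf_pos_iff.mpr (isOfFinOrder_iff_pow_eq_one.mpr ⟨q + 1, by omega, hwq1⟩)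
  have hle : q + 1 ≤ orderOf w := by
    set r0 := orderOf w with hr0
    have hQ1ne : ((q + 1 : ℕ) : Ω) ≠ 0 := by
      have hqz : ((q : ℕ) : Ω) = 0 := by
        have h1 : ((q : ℕ) : K) = 0 := by
          rw [hq]
          exact FiniteField.cast_card_eq_zero K
        rw [show (((q : ℕ) : Ω)) = A ((q : ℕ) : K) by rw [map_natCast], h1, map_zero]
      push_cast
      rw [hqz]
      simp
    set P1 : Polynomial Ω := X ^ (q + 1) - C 1 with hP1
    have hP1sep : P1.Separable := separable_X_pow_sub_C 1 hQ1ne one_ne_zero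
    have hP1ne : P1 ≠ 0 := X_pow_sub_C_ne_zero (by omega) 1
    have hP1deg : P1.natDegree = q + 1 := natDegree_X_pow_sub_C
    have hroots1 : P1.roots.card = q + 1 := by
      rw [← hP1deg]
      exact splits_iff_card_roots.mp (IsAlgClosed.splits P1)
    have hnodup : P1.roots.Nodup := Polynomial.nodup_roots hP1sep
    have hcard1 : P1.roots.toFinset.card = q + 1 := by
      rw [Multiset.toFinset_card_eq_card_iff_nodup.mpr hnodup, hroots1]
    set P2 : Polynomial Ω := X ^ r0 - C 1 with hP2
    have hP2ne : P2 ≠ 0 := X_pow_sub_C_ne_zero hwpos 1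
    have hP2deg : P2.natDegree = r0 := natDegree_X_pow_sub_C
    have hsub : P1.roots.toFinset ⊆ P2.roots.toFinset := by
      intro u hu
      rw [Multiset.mem_toFinset, mem_roots hP1ne] at hu
      have hu1 : u ^ (q + 1) = 1 := by
        simpa [hP1, IsRoot, sub_eq_zero] using hu
      obtain ⟨k, rfl⟩ := hsurj u hu1
      rw [Multiset.mem_toFinset, mem_roots hP2ne]
      have : (w ^ k) ^ r0 = 1 := by
        rw [← pow_mul, mul_comm, pow_mul, hr0, pow_orderOf_eq_one, one_pow]
      simp [hP2, IsRoot, sub_eq_zero, this]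
    calc q + 1 = P1.roots.toFinset.card := hcard1.symm
      _ ≤ P2.roots.toFinset.card := Finset.card_le_card hsub
      _ ≤ Multiset.card P2.roots := Multiset.toFinset_card_le _
      _ ≤ P2.natDegree := P2.card_roots'
      _ = r0 := hP2deg
  have hword : orderOf w = q + 1 := Nat.le_antisymm (Nat.le_of_dvd (by omega) hwfin) hle
  -- the order of z is exactly (q+1) * n
  have hzfin : z ^ (n * (q + 1)) = 1 := by rw [pow_mul, hznw, hwq1]
  set r := orderOf z with hr
  have hrpos : 0 < r :=
    orderOf_pos_iff.mpr (isOfFinOrder_iff_pow_eq_one.mpr ⟨n * (q + 1), by positivity, hzfin⟩)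
  have hordzn : q + 1 = r / Nat.gcd r n := by
    have h1 := orderOf_pow' z (show n ≠ 0 by omega)
    rw [hznw, hword] at h1
    exact h1
  have hgcddvd : Nat.gcd r n ∣ r := Nat.gcd_dvd_left r n
  have hrval : r = (q + 1) * Nat.gcd r n := by
    have h1 : r / Nat.gcd r n * Nat.gcd r n = r := Nat.div_mul_cancel hgcddvd
    conv_lhs => rw [← h1]
    rw [← hordzn]
  have hnr : n ∣ r := by
    rw [hrval]
    exact dvd_mul_of_dvd_left hdvd _
  have hgcdn : Nat.gcd r n = n := Nat.dvd_antisymm (Nat.gcd_dvd_right r n) (Nat.dvd_gcd hnr dvd_rfl)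
  have hrfinal : r = (q + 1) * n := by rw [hrval, hgcdn]
  -- expansion of Frobenius powers of z and zi
  have hzpow : ∀ m : ℕ, z ^ q ^ m = b.1 ^ q ^ m + (-1 : Ω) ^ m * (s * b.2 ^ q ^ m) := by
    intro m
    rw [hz, addpow, mul_pow, hspow m]
    ring
  have hzipow : ∀ m : ℕ, zi ^ q ^ m = b.1 ^ q ^ m - (-1 : Ω) ^ m * (s * b.2 ^ q ^ m) := by
    intro m
    rw [hzi, subpow, mul_pow, hspow m]
    ring
  -- the coordinates of b are fixed by the q^n Frobenius
  have hNn : ((n * (q + 1) : ℕ) : ℤ) ∣ (1 - ((q : ℤ) + 1)) ^ n - 1 := (keyNT hdvd n).mpr dvd_rfl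
  obtain ⟨e1, e2⟩ : (b.1 ^ q ^ n + s * b.2 ^ q ^ n = b.1 + s * b.2) ∧
      (b.1 ^ q ^ n - s * b.2 ^ q ^ n = b.1 - s * b.2) := by
    have hple : 1 ≤ q ^ n := Nat.one_le_pow _ _ (by omega)
    rcases Nat.even_or_odd n with hpar | hpar
    · have hint : (n * (q + 1)) ∣ q ^ n - 1 := by
        rw [← Int.natCast_dvd_natCast, Nat.cast_sub hple]
        have h5 : ((1 : ℤ) - ((q : ℤ) + 1)) ^ n = (q : ℤ) ^ n := by
          rw [show (1 : ℤ) - ((q : ℤ) + 1) = -(q : ℤ) by ring, hpar.neg_pow]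
        rw [Nat.cast_pow, ← h5]
        exact hNn
      have hrd : r ∣ q ^ n - 1 := by
        rw [hrfinal, ← mul_comm n (q + 1)]
        exact hint
      have h1 : z ^ (q ^ n - 1) = 1 := orderOf_dvd_iff_pow_eq_one.mp hrd
      have hzn1 : z ^ q ^ n = z := by
        have h2' : z ^ (q ^ n - 1) * z = 1 * z := by rw [h1]
        rw [← pow_succ, show q ^ n - 1 + 1 = q ^ n by omega, one_mul] at h2'
        exact h2'
      have hzin1 : zi ^ q ^ n = zi := by
        rw [hziz, inv_pow, hzn1]
      constructor
      · have := hzpow n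
        rw [hzn1, hpar.neg_one_pow, one_mul] at this
        rw [← this, hz]
      · have := hzipow n
        rw [hzin1, hpar.neg_one_pow, one_mul] at this
        rw [← this, hzi]
    · have hint : (n * (q + 1)) ∣ q ^ n + 1 := by
        rw [← Int.natCast_dvd_natCast]
        have h5 : ((1 : ℤ) - ((q : ℤ) + 1)) ^ n - 1 = -((q : ℤ) ^ n + 1) := by
          rw [show (1 : ℤ) - ((q : ℤ) + 1) = -(q : ℤ) by ring, hpar.neg_pow]
          ring
        rw [h5] at hNn
        exact_mod_cast dvd_neg.mp hNn
      have hrd : r ∣ q ^ n + 1 := by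
        rw [hrfinal, ← mul_comm n (q + 1)]
        exact hint
      have h1 : z ^ (q ^ n + 1) = 1 := orderOf_dvd_iff_pow_eq_one.mp hrd
      have hzn1 : z ^ q ^ n = zi := by
        rw [hziz]
        refine eq_inv_of_mul_eq_one_left ?_
        have h7 : z ^ q ^ n * z = z ^ (q ^ n + 1) := by ring
        rw [h7]
        exact h1
      have hzin1 : zi ^ q ^ n = z := by
        rw [hziz, inv_pow, hzn1, hziz, inv_inv]
      constructor
      · have h6 := hzipow n
        rw [hzin1, hpar.neg_one_pow, hz] at h6
        linear_combination -h6
      · have h6 := hzpow n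
        rw [hzn1, hpar.neg_one_pow, hzi] at h6
        linear_combination -h6
  have hb1fix : b.1 ^ q ^ n = b.1 := by
    have h1 : (2 : Ω) * b.1 ^ q ^ n = 2 * b.1 := by linear_combination e1 + e2
    exact mul_left_cancel₀ h2 h1
  have hb2fix : b.2 ^ q ^ n = b.2 := by
    have h1 : (2 * s) * b.2 ^ q ^ n = (2 * s) * b.2 := by linear_combination e1 - e2
    exact mul_left_cancel₀ (mul_ne_zero h2 hs0) h1
  -- the adjoined field
  have halg : ∀ x ∈ ({b.1, b.2} : Set Ω), IsAlgebraic K x := fun x _ =>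
    Algebra.IsAlgebraic.isAlgebraic x
  have hFS : (IntermediateField.adjoin K ({b.1, b.2} : Set Ω)).toSubalgebra =
      Algebra.adjoin K {b.1, b.2} :=
    IntermediateField.adjoin_toSubalgebra_of_isAlgebraic halg
  set Fld := IntermediateField.adjoin K ({b.1, b.2} : Set Ω) with hFld
  rw [← hFS, IntermediateField.finrank_eq_finrank_subalgebra]
  haveI : Finite ({b.1, b.2} : Set Ω) := Set.Finite.to_subtype (Set.toFinite _)
  haveI : FiniteDimensional K Fld :=
    IntermediateField.finiteDimensional_adjoin fun x _ => Algebra.IsIntegral.isIntegral x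
  set d := Module.finrank K Fld with hd
  have hdpos : 0 < d := Module.finrank_pos
  haveI : Finite Fld := Module.finite_of_finite K
  haveI : Fintype Fld := Fintype.ofFinite _
  have hcardF : Fintype.card Fld = q ^ d := Module.card_eq_pow_finrank (K := K)
  have hfixd : ∀ t : Ω, t ∈ Fld → t ^ q ^ d = t := by
    intro t ht
    have h1 := FiniteField.pow_card (⟨t, ht⟩ : Fld)
    rw [hcardF] at h1
    have h2' := congrArg Subtype.val h1
    push_cast at h2'
    exact h2'
  have hfixn : ∀ t : Ω, t ∈ Fld → t ^ q ^ n = t := by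
    intro t ht
    induction ht using IntermediateField.adjoin_induction with
    | mem x hx =>
      rcases hx with h | h
      · rw [h]; exact hb1fix
      · rw [Set.mem_singleton_iff] at h; rw [h]; exact hb2fix
    | algebraMap c => exact Apow c n
    | add x y hx hy ihx ihy => rw [addpow, ihx, ihy]
    | inv x hx ihx => rw [inv_pow, ihx]
    | mul x y hx hy ihx ihy => rw [mul_pow, ihx, ihy]
  -- upper bound d ≤ n
  set P3 : Polynomial Ω := X ^ q ^ n - X with hP3
  have hP3deg : P3.natDegree = q ^ n :=
    FiniteField.X_pow_card_pow_sub_X_natDegree_eq Ω (by omega) hq1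
  have hP3ne : P3 ≠ 0 := FiniteField.X_pow_card_pow_sub_X_ne_zero Ω (by omega) hq1
  have hcard_le : Fintype.card Fld ≤ q ^ n := by
    have hmem : ∀ t : Fld, (t : Ω) ∈ P3.roots.toFinset := by
      intro t
      rw [Multiset.mem_toFinset, mem_roots hP3ne]
      simp [hP3, IsRoot, sub_eq_zero, hfixn _ t.2]
    have hinj : Function.Injective
        (fun t : Fld => (⟨(t : Ω), hmem t⟩ : {x // x ∈ P3.roots.toFinset})) := by
      intro t1 t2 h12
      simp only [Subtype.mk.injEq] at h12
      exact Subtype.ext h12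
    calc Fintype.card Fld ≤ Fintype.card {x // x ∈ P3.roots.toFinset} :=
          Fintype.card_le_of_injective _ hinj
      _ = P3.roots.toFinset.card := Fintype.card_coe _
      _ ≤ Multiset.card P3.roots := Multiset.toFinset_card_le _
      _ ≤ P3.natDegree := P3.card_roots'
      _ = q ^ n := hP3deg
  have hdlen : d ≤ n := by
    rw [hcardF] at hcard_le
    exact (Nat.pow_le_pow_iff_right hq1).mp hcard_le
  -- lower bound n ∣ d
  have hb1d := hfixd b.1 (IntermediateField.subset_adjoin K _ (by simp))
  have hb2d := hfixd b.2 (IntermediateField.subset_adjoin K _ (by simp))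
  have hnd : n ∣ d := by
    have hple : 1 ≤ q ^ d := Nat.one_le_pow _ _ (by omega)
    rcases Nat.even_or_odd d with hpar | hpar
    · have hzd : z ^ q ^ d = z := by
        rw [hzpow d, hb1d, hb2d, hpar.neg_one_pow, hz]
        ring
      have h1 : z ^ (q ^ d - 1) = 1 := by
        have h2' : z ^ (q ^ d - 1) * z = 1 * z := by
          rw [← pow_succ, show q ^ d - 1 + 1 = q ^ d by omega, one_mul]
          exact hzd
        exact mul_right_cancel₀ hz0 h2'
      have hrd : r ∣ q ^ d - 1 := orderOf_dvd_of_pow_eq_one h1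
      refine (keyNT hdvd d).mp ?_
      have h3 : (n * (q + 1)) ∣ q ^ d - 1 := by
        rw [mul_comm n (q + 1), ← hrfinal]
        exact hrd
      have h4 := Int.natCast_dvd_natCast.mpr h3
      rw [Nat.cast_sub hple] at h4
      have h5 : ((1 : ℤ) - ((q : ℤ) + 1)) ^ d = (q : ℤ) ^ d := by
        rw [show (1 : ℤ) - ((q : ℤ) + 1) = -(q : ℤ) by ring, hpar.neg_pow]
      rw [h5]
      push_cast at h4 ⊢
      exact h4
    · have hzd : z ^ q ^ d = zi := by
        rw [hzpow d, hb1d, hb2d, hpar.neg_one_pow, hzi]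
        ring
      have h1 : z ^ (q ^ d + 1) = 1 := by
        rw [pow_succ, hzd, mul_comm]
        exact hzzi
      have hrd : r ∣ q ^ d + 1 := orderOf_dvd_of_pow_eq_one h1
      refine (keyNT hdvd d).mp ?_
      have h3 : (n * (q + 1)) ∣ q ^ d + 1 := by
        rw [mul_comm n (q + 1), ← hrfinal]
        exact hrd
      have h4 := Int.natCast_dvd_natCast.mpr h3
      have h5 : ((1 : ℤ) - ((q : ℤ) + 1)) ^ d - 1 = -((q : ℤ) ^ d + 1) := by
        rw [show (1 : ℤ) - ((q : ℤ) + 1) = -(q : ℤ) by ring, hpar.neg_pow]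
        ring
      rw [h5, dvd_neg]
      push_cast at h4 ⊢
      exact h4
  exact Nat.le_antisymm hdlen (Nat.le_of_dvd hdpos hnd)
end

section
/- Let F_q be a finite field of odd characteristic, α ∈ F_q a nonsquare, n a divisor of q + 1 with 1 < n < q + 1, and t an element of T_α(F_q) of exact order n. Define, for a point P of T_α over the algebraic closure of F_q, u_{O,t}(P) = 1 + 1/( y(P) − (y(t)/(x(t) − 1)) (x(P) − 1) ). Then the function P ↦ Σ_{k=0}^{n−1} u_{O,t}(P ⊖ kt) is constant on T_α(closure of F_q) outside the subgroup generated by t: there is a constant c ∈ F_q such that this sum equals c for every such P. Moreover, there exist scalars 𝔞 ≠ 0 and 𝔟 in F_q with 𝔞·c + n·𝔟 = 1. -/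
/-- Difference `P ⊖ Q` in the Lucas torus group law (the inverse of `(x,y)` is `(x,-y)`). -/
def tsub {F : Type*} [Field F] (α : F) (P Q : F × F) : F × F :=
  tmul α P (Q.1, -Q.2)

lemma key_id {Ω : Type*} [Field Ω] (S P1 P2 a1 a2 T1 T2 : Ω)
    (hS : S ≠ 0)
    (hP : P1^2 - S^2*P2^2 = 1) (ha : a1^2 - S^2*a2^2 = 1) (hT : T1^2 - S^2*T2^2 = 1)
    (hT11 : T1 - 1 ≠ 0) (hτ1 : T1 + S*T2 ≠ 1)
    (hz : P1 + S*P2 ≠ 0) (hu : a1 + S*a2 ≠ 0)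
    (hzu : P1 + S*P2 - (a1 + S*a2) ≠ 0)
    (hzτu : P1 + S*P2 - (T1 + S*T2)*(a1 + S*a2) ≠ 0) :
    (P1*(-a2) + a1*P2 - (T2/(T1-1)) * ((P1*a1 + S^2*P2*(-a2)) - 1))⁻¹
      = S*(P1 + S*P2)/((P1 + S*P2) - (a1 + S*a2))
        - S*(P1 + S*P2)/((P1 + S*P2) - (T1 + S*T2)*(a1 + S*a2)) := by
  set z := P1 + S*P2 with hzdef
  set u := a1 + S*a2 with hudef
  set τ := T1 + S*T2 with hτdef
  set N := (T1-1)*(a1*P2 - P1*a2) - T2*((P1*a1 - S^2*(P2*a2)) - 1) with hNdef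
  have hkey : (T1-1)*((z-u)*(z-τ*u)) = (-(S*z*u*(τ-1))) * N := by
    rw [hzdef, hudef, hτdef, hNdef]
    linear_combination ((-1) + (1)*T1 + (-1)*a2^2*S^2 + (1)*a2^2*T2*S^3 + (2)*a2^2*T1*S^2 + (-1)*a2^2*T1*T2*S^3 + (-1)*a2^2*T1^2*S^2 + (-1)*a1*a2*S + (2)*a1*a2*T2*S^2 + (-1)*a1*a2*T2^2*S^3 + (2)*a1*a2*T1*S + (-2)*a1*a2*T1*T2*S^2 + (-1)*a1*a2*T1^2*S + (1)*a1^2*T2*S + (-1)*a1^2*T2^2*S^2 + (-1)*a1^2*T1*T2*S) * hP +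
      ((-1)*T2^2*S^2 + (-1)*T1 + (1)*T1^2 + (1)*P2^2*S^2 + (-1)*P2^2*T2^2*S^4 + (-2)*P2^2*T1*S^2 + (1)*P2^2*T1^2*S^2 + (1)*P1*P2*S + (-1)*P1*P2*T2^2*S^3 + (-2)*P1*P2*T1*S + (1)*P1*P2*T1^2*S) * ha +
      ((1) + (1)*a2^2*S^2 + (1)*a1*a2*S + (-1)*P2*a2*S^2 + (-1)*P2*a1*S + (1)*P2^2*S^2 + (-1)*P1*a2*S + (-1)*P1*a1 + (1)*P1*P2*S) * hT
  have hτ1' : τ - 1 ≠ 0 := sub_ne_zero.mpr hτ1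
  have hnum : -(S*z*u*(τ-1)) ≠ 0 := by
    simp only [neg_ne_zero]
    exact mul_ne_zero (mul_ne_zero (mul_ne_zero hS hz) hu) hτ1'
  have hN0 : N ≠ 0 := by
    intro h
    rw [h, mul_zero] at hkey
    exact (mul_ne_zero hT11 (mul_ne_zero hzu hzτu)) hkey
  have hD : P1*(-a2) + a1*P2 - (T2/(T1-1)) * ((P1*a1 + S^2*P2*(-a2)) - 1) = N / (T1-1) := by
    rw [hNdef]
    field_simp
    ring
  rw [hD, inv_div]
  have hE : S*z/(z-u) - S*z/(z-τ*u) = (-(S*z*u*(τ-1))) / ((z-u)*(z-τ*u)) := by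
    rw [div_sub_div _ _ hzu hzτu, div_eq_div_iff (mul_ne_zero hzu hzτu) (mul_ne_zero hzu hzτu)]
    ring
  rw [hE, div_eq_div_iff hN0 (mul_ne_zero hzu hzτu)]
  linear_combination hkey

lemma tpow_succ_eq {F : Type*} [Field F] (α : F) (k : ℕ) (P : F × F) :
    tpow α (k+1) P = tmul α P (tpow α k P) := by
  simp [tpow, Function.iterate_succ_apply']

lemma norm_tpow {F : Type*} [Field F] {α : F} {t : F × F} (ht : t.1^2 - α*t.2^2 = 1) :
    ∀ k, (tpow α k t).1^2 - α*(tpow α k t).2^2 = 1 := by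
  intro k
  induction k with
  | zero => simp [tpow]
  | succ k ih =>
      rw [tpow_succ_eq, tmul]
      simp only
      linear_combination ((tpow α k t).1^2 - α*(tpow α k t).2^2) * ht + ih

/-- For `t ∈ T_α(F_q)` of exact order `n` and
`u_{O,t}(P) = 1 + 1/(y(P) - (y(t)/(x(t)-1))(x(P)-1))`, the function
`P ↦ Σ_{k=0}^{n-1} u_{O,t}(P ⊖ kt)` is constant, equal to some `c ∈ F_q`, on the points
of the torus over the algebraic closure lying outside `⟨t⟩`; moreover there are scalars
`𝔞 ≠ 0` and `𝔟` in `F_q` with `𝔞c + n𝔟 = 1`. -/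
theorem stmt_13 (K : Type*) [Field K] [Fintype K] (hchar : ringChar K ≠ 2)
    (α : K) (hα : ¬ IsSquare α)
    (n : ℕ) (hn1 : 1 < n) (hn2 : n < Fintype.card K + 1)
    (hdvd : n ∣ Fintype.card K + 1)
    (t : K × K) (ht : t.1 ^ 2 - α * t.2 ^ 2 = 1)
    (htn : tpow α n t = (1, 0))
    (htord : ∀ m : ℕ, 0 < m → m < n → tpow α m t ≠ (1, 0))
    (Ω : Type*) [Field Ω] [Algebra K Ω] [IsAlgClosure K Ω] :
    ∃ c : K,
      (∀ P : Ω × Ω, P.1 ^ 2 - algebraMap K Ω α * P.2 ^ 2 = 1 →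
        (∀ k : ℕ, P ≠ (algebraMap K Ω (tpow α k t).1, algebraMap K Ω (tpow α k t).2)) →
        ∑ k ∈ Finset.range n,
          (1 + ((tsub (algebraMap K Ω α) P
                  ((algebraMap K Ω (tpow α k t).1, algebraMap K Ω (tpow α k t).2))).2 -
                (algebraMap K Ω t.2 / (algebraMap K Ω t.1 - 1)) *
                  ((tsub (algebraMap K Ω α) P
                    ((algebraMap K Ω (tpow α k t).1,
                      algebraMap K Ω (tpow α k t).2))).1 - 1))⁻¹) =
          algebraMap K Ω c) ∧
      ∃ 𝔞 : K, 𝔞 ≠ 0 ∧ ∃ 𝔟 : K, 𝔞 * c + (n : K) * 𝔟 = 1 := by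
  -- basic facts
  have hα0 : α ≠ 0 := fun h => hα (h ▸ ⟨0, by ring⟩)
  haveI := ringChar.charP K
  have hprime : (ringChar K).Prime := CharP.char_is_prime K (ringChar K)
  have hnK : (n : K) ≠ 0 := by
    intro h
    have hdn : ringChar K ∣ n := (CharP.cast_eq_zero_iff K _ n).mp h
    have hcard : ringChar K ∣ Fintype.card K :=
      (CharP.cast_eq_zero_iff K _ _).mp (FiniteField.cast_card_eq_zero K)
    have h1 : ringChar K ∣ 1 := by
      have := Nat.dvd_sub (dvd_trans hdn hdvd) hcard
      simpa using this
    exact Nat.Prime.one_lt hprime |>.ne' (Nat.dvd_one.mp h1)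
  set f := algebraMap K Ω with hfdef
  have hfinj : Function.Injective f := f.injective
  -- square root of α in Ω
  haveI : IsAlgClosed Ω := IsAlgClosure.isAlgClosed (R := K)
  obtain ⟨S, hS2⟩ : ∃ S : Ω, S^2 = f α :=
    IsAlgClosed.exists_pow_nat_eq (f α) (n := 2) (by norm_num)
  have hS : S ≠ 0 := by
    intro h
    rw [h] at hS2
    exact hα0 (hfinj (by simpa using hS2.symm))
  have h2 : (2:Ω) ≠ 0 := by
    haveI : CharP Ω (ringChar K) := charP_of_injective_algebraMap hfinj (ringChar K)
    have hrc : ringChar Ω = ringChar K := ringChar.eq Ω (ringChar K)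
    exact Ring.two_ne_zero (hrc ▸ hchar)
  -- t is not the identity
  have htpow1 : tpow α 1 t = t := by simp [tpow, tmul]
  have ht1 : t ≠ (1, 0) := fun h => htord 1 one_pos hn1 (htpow1.trans h)
  have ht11 : t.1 ≠ 1 := by
    intro h
    apply ht1
    have h2' : t.2 = 0 := by
      have : α * t.2^2 = 0 := by rw [h] at ht; linear_combination -ht
      rcases mul_eq_zero.mp this with h' | h'
      · exact absurd h' hα0
      · exact pow_eq_zero_iff (two_ne_zero) |>.mp h'
    exact Prod.ext h h2'
  have hT11 : f t.1 - 1 ≠ 0 := by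
    intro h
    exact ht11 (hfinj (by rw [map_one]; exact sub_eq_zero.mp h))
  set τ := f t.1 + S * f t.2 with hτdef
  have hτconj : τ * (f t.1 - S * f t.2) = 1 := by
    have := congrArg f ht
    simp only [map_sub, map_mul, map_pow, map_one] at this
    linear_combination this - (f t.2)^2 * hS2
  have hτ0 : τ ≠ 0 := left_ne_zero_of_mul_eq_one hτconj
  have hτ1 : τ ≠ 1 := by
    intro h
    apply hT11
    rw [h, one_mul] at hτconj
    rw [hτdef] at h
    have h4 : (2:Ω) * (f t.1 - 1) = 0 := by linear_combination h + hτconj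
    exact (mul_eq_zero.mp h4).resolve_left h2
  -- images of powers of t
  have hknorm : ∀ k, (f (tpow α k t).1)^2 - S^2 * (f (tpow α k t).2)^2 = 1 := by
    intro k
    have := congrArg f (norm_tpow ht k)
    simp only [map_sub, map_mul, map_pow, map_one] at this
    linear_combination this - (f (tpow α k t).2)^2 * hS2
  have gpow : ∀ k, f (tpow α k t).1 + S * f (tpow α k t).2 = τ^k := by
    intro k
    induction k with
    | zero => simp [tpow]
    | succ k ih =>
        rw [tpow_succ_eq, tmul]
        simp only [map_add, map_mul]
        rw [pow_succ]
        linear_combination (f t.1 + S * f t.2) * ih - (f t.2 * f (tpow α k t).2) * hS2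
  have gconj : ∀ k, (f (tpow α k t).1 + S * f (tpow α k t).2) *
      (f (tpow α k t).1 - S * f (tpow α k t).2) = 1 := by
    intro k
    linear_combination hknorm k
  have hτn : τ^n = 1 := by rw [← gpow n, htn]; simp
  refine ⟨(n : K), ?_, 1, one_ne_zero, (n:K)⁻¹ - 1, ?_⟩
  · intro P hP hPk
    set z := P.1 + S * P.2 with hzdef
    have hzconj : z * (P.1 - S * P.2) = 1 := by
      linear_combination hP - (P.2)^2 * hS2
    have hz0 : z ≠ 0 := left_ne_zero_of_mul_eq_one hzconj
    -- z avoids all powers of τ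
    have hzne : ∀ k : ℕ, z - τ^k ≠ 0 := by
      intro k h
      apply hPk k
      have hzeq : z = τ^k := sub_eq_zero.mp h
      have h1' : P.1 + S * P.2 = f (tpow α k t).1 + S * f (tpow α k t).2 := by
        rw [gpow k, ← hzeq]
      have h2' : P.1 - S * P.2 = f (tpow α k t).1 - S * f (tpow α k t).2 := by
        have hu0 : f (tpow α k t).1 + S * f (tpow α k t).2 ≠ 0 := by
          rw [gpow k]; exact pow_ne_zero _ hτ0
        have e1 : (f (tpow α k t).1 + S * f (tpow α k t).2) * (P.1 - S*P.2) = 1 := by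
          rw [← h1', ← hzdef] at *
          exact hzconj
        have e2 := gconj k
        calc P.1 - S * P.2 = (f (tpow α k t).1 + S * f (tpow α k t).2)⁻¹ :=
              (inv_eq_of_mul_eq_one_right e1).symm
          _ = f (tpow α k t).1 - S * f (tpow α k t).2 := inv_eq_of_mul_eq_one_right e2
      have hP1 : P.1 = f (tpow α k t).1 := by
        have h4 : (2:Ω) * (P.1 - f (tpow α k t).1) = 0 := by linear_combination h1' + h2'
        exact sub_eq_zero.mp ((mul_eq_zero.mp h4).resolve_left h2)
      have hP2 : P.2 = f (tpow α k t).2 := by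
        have h4 : (2:Ω) * (S * (P.2 - f (tpow α k t).2)) = 0 := by linear_combination h1' - h2'
        have h5 := (mul_eq_zero.mp h4).resolve_left h2
        exact sub_eq_zero.mp ((mul_eq_zero.mp h5).resolve_left hS)
      exact Prod.ext hP1 hP2
    -- rewrite each summand
    have hterm : ∀ k ∈ Finset.range n,
        (1 + ((tsub (f α) P ((f (tpow α k t).1, f (tpow α k t).2))).2 -
              (f t.2 / (f t.1 - 1)) *
                ((tsub (f α) P ((f (tpow α k t).1, f (tpow α k t).2))).1 - 1))⁻¹)
        = 1 + (S*z/(z - τ^k) - S*z/(z - τ^(k+1))) := by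
      intro k _
      have hu0 : f (tpow α k t).1 + S * f (tpow α k t).2 ≠ 0 := by
        rw [gpow k]; exact pow_ne_zero _ hτ0
      have hzu : P.1 + S*P.2 - (f (tpow α k t).1 + S * f (tpow α k t).2) ≠ 0 := by
        rw [gpow k]; exact hzne k
      have hzτu : P.1 + S*P.2 - (f t.1 + S*f t.2)*(f (tpow α k t).1 + S * f (tpow α k t).2) ≠ 0 := by
        rw [gpow k, ← hτdef, ← pow_succ']
        exact hzne (k+1)
      have hPn : P.1^2 - S^2*P.2^2 = 1 := by linear_combination hP - (P.2)^2 * hS2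
      have := key_id S P.1 P.2 (f (tpow α k t).1) (f (tpow α k t).2) (f t.1) (f t.2)
        hS hPn (hknorm k) (by linear_combination hτconj) hT11 hτ1 hz0 hu0 hzu hzτu
      simp only [tsub, tmul]
      rw [← hS2]
      rw [this, gpow k, ← hτdef, ← pow_succ']
    rw [Finset.sum_congr rfl hterm]
    have : ∑ k ∈ Finset.range n, (1 + (S*z/(z - τ^k) - S*z/(z - τ^(k+1))))
        = (n : Ω) + (S*z/(z - τ^0) - S*z/(z - τ^n)) := by
      rw [Finset.sum_add_distrib, Finset.sum_range_sub' (fun k => S*z/(z - τ^k)) n]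
      simp
    rw [this, hτn, pow_zero, map_natCast]
    ring
  · field_simp
    ring
end
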